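/- arXiv:1103.0495 — 10 statements merged into one kernel-verified Lean document; each statement's English description precedes it below -/
import Mathlib

section
/- For every u₁ > 0 and every k with 2 ≤ k ≤ n, the following hold: (i) U_k(u₁) − U_{k−1}(u₁) = h²(½g₁(u₁) + Σ_{j=2}^{k−1} g₁(U_j(u₁))) > 0; (ii) U_k(u₁) = u₁ + h²(((k−1)/2)g₁(u₁) + Σ_{j=2}^{k−1}(k−j)g₁(U_j(u₁))) > 0; (iii) U_k′(u₁) − U_{k−1}′(u₁) = h²(½g₁′(u₁) + Σ_{j=2}^{k−1} g₁′(U_j(u₁))U_j′(u₁)) > 0; (iv) U_k′(u₁) = 1 + h²(((k−1)/2)g₁′(u₁) + Σ_{j=2}^{k−1}(k−j)g₁′(U_j(u₁))U_j′(u₁)) > 1, where ′ denotes the derivative with respect to u₁. -/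
noncomputable section

/-- `Useq g1 h k` is the function `U_{k+1}` (0-indexed version of the recursion). -/
def Useq (g1 : ℝ → ℝ) (h : ℝ) : ℕ → ℝ → ℝ
  | 0 => fun x => x
  | 1 => fun x => x + h ^ 2 / 2 * g1 x
  | k + 2 => fun x =>
      2 * Useq g1 h (k + 1) x - Useq g1 h k x + h ^ 2 * g1 (Useq g1 h (k + 1) x)

/-- `discU g1 h k` is the function `U_k` from the paper, for `1 ≤ k`. -/
def discU (g1 : ℝ → ℝ) (h : ℝ) (k : ℕ) : ℝ → ℝ := Useq g1 h (k - 1)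

/-- The function `A(u₁)` from the paper. -/
def discA (g1 g2 : ℝ → ℝ) (h : ℝ) (n : ℕ) (x : ℝ) : ℝ :=
  ((discU g1 h n x - discU g1 h (n - 1) x) / h + h / 2 * g1 (discU g1 h n x)) /
    g2 (discU g1 h n x)

/-- `(u₁, …, u_n)` (encoded as `u : ℕ → ℝ` on indices `1,…,n`) is a positive solution of
the discrete system `(Sα)`. -/
def IsSolution (g1 g2 : ℝ → ℝ) (n : ℕ) (h α : ℝ) (u : ℕ → ℝ) : Prop :=
  (∀ k, 1 ≤ k → k ≤ n → 0 < u k) ∧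
  u 2 - u 1 = h ^ 2 / 2 * g1 (u 1) ∧
  (∀ k, 2 ≤ k → k ≤ n - 1 → u (k + 1) - 2 * u k + u (k - 1) = h ^ 2 * g1 (u k)) ∧
  u n - u (n - 1) = -(h ^ 2 / 2) * g1 (u n) + h * α * g2 (u n)

/-- `G₁`, the primitive of `g₁` vanishing at `0`. -/
def primG1 (g1 : ℝ → ℝ) (x : ℝ) : ℝ := ∫ t in (0:ℝ)..x, g1 t

/-- `g := g₁/g₂`. -/
def gg (g1 g2 : ℝ → ℝ) (x : ℝ) : ℝ := g1 x / g2 x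

/-- `G := G₁/g₂²`. -/
def GG (g1 g2 : ℝ → ℝ) (x : ℝ) : ℝ := primG1 g1 x / (g2 x) ^ 2

/-- The trapezoidal-rule error `E` as a function of `u₁`. -/
def trapError (g1 : ℝ → ℝ) (h : ℝ) (n : ℕ) (x : ℝ) : ℝ :=
  (∑ k ∈ Finset.Icc 1 (n - 1),
    (g1 (discU g1 h k x) + g1 (discU g1 h (k + 1) x)) / 2 *
      (discU g1 h (k + 1) x - discU g1 h k x)) -
  (primG1 g1 (discU g1 h n x) - primG1 g1 (discU g1 h 1 x))

/-- The Jacobian matrix `J(α,u)` of the system `(Sα)`. -/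
def Jmat (g1 g2 : ℝ → ℝ) (n : ℕ) (h α : ℝ) (u : ℕ → ℝ) : Matrix (Fin n) (Fin n) ℝ :=
  Matrix.of fun i j =>
    if i = j then
      (if (i : ℕ) = 0 then 1 + h ^ 2 / 2 * deriv g1 (u 1)
       else if (i : ℕ) = n - 1 then
         1 + h ^ 2 / 2 * deriv g1 (u n) - h * α * deriv g2 (u n)
       else 2 + h ^ 2 * deriv g1 (u ((i : ℕ) + 1)))
    else if (i : ℕ) + 1 = (j : ℕ) ∨ (j : ℕ) + 1 = (i : ℕ) then -1 else 0
namespace DiscAux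

def Vseq (g1 : ℝ → ℝ) (h : ℝ) : ℕ → ℝ → ℝ
  | 0 => fun _ => 1
  | 1 => fun x => 1 + h ^ 2 / 2 * deriv g1 x
  | k + 2 => fun x =>
      2 * Vseq g1 h (k + 1) x - Vseq g1 h k x +
        h ^ 2 * (deriv g1 (Useq g1 h (k + 1) x) * Vseq g1 h (k + 1) x)

variable {g1 : ℝ → ℝ} {h : ℝ}

lemma useq_hasDerivAt (hg1 : Differentiable ℝ g1) :
    ∀ m x, HasDerivAt (Useq g1 h m) (Vseq g1 h m x) x := by
  have key : ∀ m, (∀ x, HasDerivAt (Useq g1 h m) (Vseq g1 h m x) x) ∧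
      (∀ x, HasDerivAt (Useq g1 h (m + 1)) (Vseq g1 h (m + 1) x) x) := by
    intro m
    induction m with
    | zero =>
      constructor
      · intro x; simpa [Useq, Vseq] using hasDerivAt_id' (x := x)
      · intro x
        have h1 : HasDerivAt (fun x => x + h ^ 2 / 2 * g1 x)
            (1 + h ^ 2 / 2 * deriv g1 x) x :=
          (hasDerivAt_id x).add (((hg1 x).hasDerivAt).const_mul (h ^ 2 / 2))
        simpa [Useq, Vseq] using h1
    | succ m ih =>
      refine ⟨ih.2, fun x => ?_⟩
      have hc : HasDerivAt (fun x => g1 (Useq g1 h (m + 1) x))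
          (deriv g1 (Useq g1 h (m + 1) x) * Vseq g1 h (m + 1) x) x :=
        (hg1 _).hasDerivAt.comp x (ih.2 x)
      have h2 := (((ih.2 x).const_mul 2).sub (ih.1 x)).add (hc.const_mul (h ^ 2))
      simp only [Useq, Vseq]; exact h2
  exact fun m => (key m).1

lemma deriv_useq (hg1 : Differentiable ℝ g1) (m : ℕ) :
    deriv (Useq g1 h m) = Vseq g1 h m :=
  funext fun x => (useq_hasDerivAt hg1 m x).deriv

lemma useq_pos (hhne : h ≠ 0) (hg1pos : ∀ x > (0:ℝ), 0 < g1 x) {u : ℝ} (hu : 0 < u) :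
    ∀ m, 0 < Useq g1 h m u ∧ Useq g1 h m u < Useq g1 h (m + 1) u := by
  have hh2 : 0 < h ^ 2 := by positivity
  intro m
  induction m with
  | zero =>
    refine ⟨by simpa [Useq] using hu, ?_⟩
    have := hg1pos u hu
    simp only [Useq]
    nlinarith
  | succ m ih =>
    have h1 : 0 < Useq g1 h (m + 1) u := lt_trans ih.1 ih.2
    refine ⟨h1, ?_⟩
    have hg := hg1pos _ h1
    simp only [Useq]
    nlinarith [ih.2]

lemma vseq_pos (hhne : h ≠ 0) (hg1d : ∀ x > (0:ℝ), 0 < deriv g1 x)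
    (hg1pos : ∀ x > (0:ℝ), 0 < g1 x) {u : ℝ} (hu : 0 < u) :
    ∀ m, 1 ≤ Vseq g1 h m u ∧ Vseq g1 h m u < Vseq g1 h (m + 1) u := by
  have hh2 : 0 < h ^ 2 := by positivity
  intro m
  induction m with
  | zero =>
    refine ⟨by simp [Vseq], ?_⟩
    have := hg1d u hu
    simp only [Vseq]
    nlinarith
  | succ m ih =>
    have h1 : 1 ≤ Vseq g1 h (m + 1) u := le_of_lt (lt_of_le_of_lt ih.1 ih.2)
    refine ⟨h1, ?_⟩
    have hU : 0 < Useq g1 h (m + 1) u := (useq_pos hhne hg1pos hu (m + 1)).1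
    have hg := hg1d _ hU
    have hp : 0 < h ^ 2 * (deriv g1 (Useq g1 h (m + 1) u) * Vseq g1 h (m + 1) u) :=
      mul_pos hh2 (mul_pos hg (lt_of_lt_of_le zero_lt_one h1))
    simp only [Vseq]
    linarith [ih.2]

lemma gen_diff (a b : ℕ → ℝ) (hbase : a 1 - a 0 = h ^ 2 / 2 * b 0)
    (hrec : ∀ m, a (m + 2) - a (m + 1) = a (m + 1) - a m + h ^ 2 * b (m + 1)) :
    ∀ m, a (m + 1) - a m = h ^ 2 * (b 0 / 2 + ∑ j ∈ Finset.Icc 1 m, b j) := by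
  intro m
  induction m with
  | zero => simp [hbase]; ring
  | succ m ih =>
    rw [hrec m, ih, Finset.sum_Icc_succ_top (by omega : 1 ≤ m + 1)]
    ring

lemma gen_closed (a b : ℕ → ℝ) (hbase : a 1 - a 0 = h ^ 2 / 2 * b 0)
    (hrec : ∀ m, a (m + 2) - a (m + 1) = a (m + 1) - a m + h ^ 2 * b (m + 1)) :
    ∀ m, a m = a 0 + h ^ 2 * ((m : ℝ) / 2 * b 0 +
      ∑ j ∈ Finset.Icc 1 (m - 1), ((m : ℝ) - (j : ℝ)) * b j) := by
  intro m
  induction m with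
  | zero => simp
  | succ m ih =>
    have hd := gen_diff a b hbase hrec m
    match m, ih, hd with
    | 0, ih, hd => simp at hd ⊢; linarith
    | m + 1, ih, hd =>
      simp only [Nat.add_sub_cancel] at ih ⊢
      push_cast at ih hd ⊢
      have e1 : (∑ j ∈ Finset.Icc 1 (m + 1), ((m : ℝ) + 1 + 1 - (j : ℝ)) * b j) =
          (∑ j ∈ Finset.Icc 1 m, ((m : ℝ) + 1 - (j : ℝ)) * b j) +
          ∑ j ∈ Finset.Icc 1 (m + 1), b j := by
        rw [Finset.sum_Icc_succ_top (by omega : 1 ≤ m + 1),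
            Finset.sum_Icc_succ_top (by omega : 1 ≤ m + 1)]
        have e2 : ∀ j ∈ Finset.Icc 1 m,
            ((m : ℝ) + 1 + 1 - (j : ℝ)) * b j = ((m : ℝ) + 1 - (j : ℝ)) * b j + b j :=
          fun j _ => by ring
        rw [Finset.sum_congr rfl e2, Finset.sum_add_distrib]
        push_cast
        ring
      linear_combination ih + hd - h ^ 2 * e1

lemma sum_shift (f : ℕ → ℝ) (m : ℕ) :
    ∑ j ∈ Finset.Icc 2 (m + 1), f j = ∑ j ∈ Finset.Icc 1 m, f (j + 1) := by
  have : Finset.Icc 2 (m + 1) = Finset.map (addRightEmbedding 1) (Finset.Icc 1 m) := by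
    rw [Finset.map_add_right_Icc]
  rw [this, Finset.sum_map]
  rfl

end DiscAux

theorem stmt_0 (n : ℕ) (hn : 2 ≤ n) (h : ℝ) (hh : h = 1 / ((n : ℝ) - 1))
    (g1 g2 : ℝ → ℝ)
    (hg1C : ContDiff ℝ 3 g1) (hg2C : ContDiff ℝ 3 g2)
    (hg10 : g1 0 = 0) (hg20 : g2 0 = 0)
    (hg1d : ∀ x > (0:ℝ), 0 < deriv g1 x) (hg2d : ∀ x > (0:ℝ), 0 < deriv g2 x)
    (hg1dd : ∀ x > (0:ℝ), 0 < deriv (deriv g1) x)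
    (hg2dd : ∀ x > (0:ℝ), 0 < deriv (deriv g2) x)
    (hg1ddd : ∀ x > (0:ℝ), 0 ≤ deriv (deriv (deriv g1)) x)
    (hg2ddd : ∀ x > (0:ℝ), 0 ≤ deriv (deriv (deriv g2)) x) :
    ∀ u1 : ℝ, 0 < u1 → ∀ k, 2 ≤ k → k ≤ n →
      (discU g1 h k u1 - discU g1 h (k - 1) u1 =
          h ^ 2 * (g1 u1 / 2 + ∑ j ∈ Finset.Icc 2 (k - 1), g1 (discU g1 h j u1)) ∧
        0 < discU g1 h k u1 - discU g1 h (k - 1) u1) ∧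
      (discU g1 h k u1 =
          u1 + h ^ 2 * (((k : ℝ) - 1) / 2 * g1 u1 +
            ∑ j ∈ Finset.Icc 2 (k - 1), ((k : ℝ) - (j : ℝ)) * g1 (discU g1 h j u1)) ∧
        0 < discU g1 h k u1) ∧
      (deriv (discU g1 h k) u1 - deriv (discU g1 h (k - 1)) u1 =
          h ^ 2 * (deriv g1 u1 / 2 +
            ∑ j ∈ Finset.Icc 2 (k - 1),
              deriv g1 (discU g1 h j u1) * deriv (discU g1 h j) u1) ∧
        0 < deriv (discU g1 h k) u1 - deriv (discU g1 h (k - 1)) u1) ∧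
      (deriv (discU g1 h k) u1 =
          1 + h ^ 2 * (((k : ℝ) - 1) / 2 * deriv g1 u1 +
            ∑ j ∈ Finset.Icc 2 (k - 1),
              ((k : ℝ) - (j : ℝ)) * deriv g1 (discU g1 h j u1) * deriv (discU g1 h j) u1) ∧
        1 < deriv (discU g1 h k) u1) := by
  have hnr : (2:ℝ) ≤ (n:ℝ) := by exact_mod_cast hn
  have hhpos : 0 < h := by rw [hh]; apply div_pos one_pos; linarith
  have hhne : h ≠ 0 := ne_of_gt hhpos
  have hg1diff : Differentiable ℝ g1 := hg1C.differentiable (by norm_num)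
  have hg1pos : ∀ x > (0:ℝ), 0 < g1 x := by
    intro x hx
    have hmono : StrictMonoOn g1 (Set.Ici (0:ℝ)) :=
      strictMonoOn_of_deriv_pos (convex_Ici 0) hg1diff.continuous.continuousOn
        (fun y hy => hg1d y (by simpa using hy))
    have := hmono Set.self_mem_Ici (Set.mem_Ici.mpr hx.le) hx
    simpa [hg10] using this
  intro u1 hu1 k hk2 hkn
  obtain ⟨m, rfl⟩ : ∃ m, k = m + 2 := ⟨k - 2, by omega⟩
  have hUpos := DiscAux.useq_pos (g1 := g1) hhne hg1pos hu1
  have hVpos := DiscAux.vseq_pos (g1 := g1) hhne hg1d hg1pos hu1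
  -- the four abstract recurrences
  have hUdiff : ∀ m, Useq g1 h (m + 1) u1 - Useq g1 h m u1 =
      h ^ 2 * (g1 u1 / 2 + ∑ j ∈ Finset.Icc 1 m, g1 (Useq g1 h j u1)) := by
    have := DiscAux.gen_diff (h := h) (fun i => Useq g1 h i u1)
      (fun i => g1 (Useq g1 h i u1)) ?base ?rec
    · simpa [Useq] using this
    case base => show Useq g1 h 1 u1 - Useq g1 h 0 u1 = _; simp [Useq]
    case rec => intro i; show Useq g1 h (i + 2) u1 - _ = _; simp only [Useq]; ring
  have hUclosed : ∀ m, Useq g1 h m u1 =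
      u1 + h ^ 2 * ((m : ℝ) / 2 * g1 u1 +
        ∑ j ∈ Finset.Icc 1 (m - 1), ((m : ℝ) - (j : ℝ)) * g1 (Useq g1 h j u1)) := by
    have := DiscAux.gen_closed (h := h) (fun i => Useq g1 h i u1)
      (fun i => g1 (Useq g1 h i u1)) ?base ?rec
    · simpa [Useq] using this
    case base => show Useq g1 h 1 u1 - Useq g1 h 0 u1 = _; simp [Useq]
    case rec => intro i; show Useq g1 h (i + 2) u1 - _ = _; simp only [Useq]; ring
  have hVdiff : ∀ m, DiscAux.Vseq g1 h (m + 1) u1 - DiscAux.Vseq g1 h m u1 =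
      h ^ 2 * (deriv g1 u1 / 2 +
        ∑ j ∈ Finset.Icc 1 m, deriv g1 (Useq g1 h j u1) * DiscAux.Vseq g1 h j u1) := by
    have := DiscAux.gen_diff (h := h) (fun i => DiscAux.Vseq g1 h i u1)
      (fun i => deriv g1 (Useq g1 h i u1) * DiscAux.Vseq g1 h i u1) ?base ?rec
    · simpa [Useq, DiscAux.Vseq] using this
    case base =>
      show DiscAux.Vseq g1 h 1 u1 - DiscAux.Vseq g1 h 0 u1 = _
      simp [DiscAux.Vseq, Useq]
    case rec =>
      intro i
      show DiscAux.Vseq g1 h (i + 2) u1 - _ = _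
      simp only [DiscAux.Vseq]; ring
  have hVclosed : ∀ m, DiscAux.Vseq g1 h m u1 =
      1 + h ^ 2 * ((m : ℝ) / 2 * deriv g1 u1 +
        ∑ j ∈ Finset.Icc 1 (m - 1),
          ((m : ℝ) - (j : ℝ)) * (deriv g1 (Useq g1 h j u1) * DiscAux.Vseq g1 h j u1)) := by
    have := DiscAux.gen_closed (h := h) (fun i => DiscAux.Vseq g1 h i u1)
      (fun i => deriv g1 (Useq g1 h i u1) * DiscAux.Vseq g1 h i u1) ?base ?rec
    · simpa [Useq, DiscAux.Vseq] using this
    case base =>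
      show DiscAux.Vseq g1 h 1 u1 - DiscAux.Vseq g1 h 0 u1 = _
      simp [DiscAux.Vseq, Useq]
    case rec =>
      intro i
      show DiscAux.Vseq g1 h (i + 2) u1 - _ = _
      simp only [DiscAux.Vseq]; ring
  simp only [discU, Nat.add_sub_cancel, DiscAux.deriv_useq hg1diff]
  push_cast
  refine ⟨⟨?_, ?_⟩, ⟨?_, ?_⟩, ⟨?_, ?_⟩, ?_, ?_⟩
  · -- (i) equality
    have s1 : ∑ j ∈ Finset.Icc 2 (m + 1), g1 (Useq g1 h (j - 1) u1) =
        ∑ j ∈ Finset.Icc 1 m, g1 (Useq g1 h j u1) := by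
      rw [DiscAux.sum_shift]; simp
    rw [s1]; exact hUdiff m
  · exact sub_pos.mpr (hUpos m).2
  · -- (ii) equality
    have s2 : ∑ j ∈ Finset.Icc 2 (m + 1), ((m : ℝ) + 2 - (j : ℝ)) * g1 (Useq g1 h (j - 1) u1) =
        ∑ j ∈ Finset.Icc 1 m, ((m : ℝ) + 1 - (j : ℝ)) * g1 (Useq g1 h j u1) := by
      rw [DiscAux.sum_shift]
      refine Finset.sum_congr rfl fun j hj => ?_
      simp only [Nat.add_sub_cancel]; push_cast; ring
    have h2 := hUclosed (m + 1)
    simp only [Nat.add_sub_cancel] at h2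
    push_cast at h2
    rw [show ((m : ℝ) + 2 - 1) = (m : ℝ) + 1 by ring, s2]
    convert h2 using 2
  · exact (hUpos (m + 1)).1
  · -- (iii) equality
    have s3 : ∑ j ∈ Finset.Icc 2 (m + 1),
        deriv g1 (Useq g1 h (j - 1) u1) * DiscAux.Vseq g1 h (j - 1) u1 =
        ∑ j ∈ Finset.Icc 1 m, deriv g1 (Useq g1 h j u1) * DiscAux.Vseq g1 h j u1 := by
      rw [DiscAux.sum_shift]; simp
    rw [s3]; exact hVdiff m
  · exact sub_pos.mpr (hVpos m).2
  · -- (iv) equality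
    have s4 : ∑ j ∈ Finset.Icc 2 (m + 1),
        ((m : ℝ) + 2 - (j : ℝ)) * deriv g1 (Useq g1 h (j - 1) u1) * DiscAux.Vseq g1 h (j - 1) u1 =
        ∑ j ∈ Finset.Icc 1 m,
          ((m : ℝ) + 1 - (j : ℝ)) * (deriv g1 (Useq g1 h j u1) * DiscAux.Vseq g1 h j u1) := by
      rw [DiscAux.sum_shift]
      refine Finset.sum_congr rfl fun j hj => ?_
      simp only [Nat.add_sub_cancel]; push_cast; ring
    have h4 := hVclosed (m + 1)
    simp only [Nat.add_sub_cancel] at h4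
    push_cast at h4
    rw [show ((m : ℝ) + 2 - 1) = (m : ℝ) + 1 by ring, s4]
    convert h4 using 2
  · exact lt_of_le_of_lt (hVpos m).1 (hVpos m).2
end
end

section
/- For every u₁ > 0 and every k with 2 ≤ k ≤ n, the following hold, where all derivatives are with respect to u₁: (i) the derivative of u₁ ↦ (U_k(u₁) − U_{k−1}(u₁))/g₁(U_k(u₁)) is strictly negative; (ii) the derivative of u₁ ↦ (U_k(u₁) − U₁(u₁))/g₁(U_k(u₁)) is strictly negative; (iii) the derivative of u₁ ↦ (U_k(u₁) − U_{k−1}(u₁))/(U_k(u₁) − U₁(u₁)) is nonnegative; (iv) the derivative of u₁ ↦ g₁(U_k(u₁))/g₁(U₁(u₁)) is strictly positive. -/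
noncomputable section

set_option maxHeartbeats 1000000

def Vseq (g1 : ℝ → ℝ) (h : ℝ) : ℕ → ℝ → ℝ
  | 0 => fun _ => 1
  | 1 => fun x => 1 + h ^ 2 / 2 * deriv g1 x
  | k + 2 => fun x =>
      2 * Vseq g1 h (k + 1) x - Vseq g1 h k x +
        h ^ 2 * (deriv g1 (Useq g1 h (k + 1) x) * Vseq g1 h (k + 1) x)

lemma Useq_diff (g1 : ℝ → ℝ) (h : ℝ) (m : ℕ) (x : ℝ) : Useq g1 h (m+2) x - Useq g1 h (m+1) x
    = (Useq g1 h (m+1) x - Useq g1 h m x) + h ^ 2 * g1 (Useq g1 h (m+1) x) := by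
  show 2 * Useq g1 h (m + 1) x - Useq g1 h m x + h ^ 2 * g1 (Useq g1 h (m + 1) x)
      - Useq g1 h (m+1) x = _
  ring

lemma Vseq_diff (g1 : ℝ → ℝ) (h : ℝ) (m : ℕ) (x : ℝ) : Vseq g1 h (m+2) x - Vseq g1 h (m+1) x
    = (Vseq g1 h (m+1) x - Vseq g1 h m x)
      + h ^ 2 * (deriv g1 (Useq g1 h (m+1) x) * Vseq g1 h (m+1) x) := by
  show 2 * Vseq g1 h (m + 1) x - Vseq g1 h m x
      + h ^ 2 * (deriv g1 (Useq g1 h (m + 1) x) * Vseq g1 h (m + 1) x)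
      - Vseq g1 h (m+1) x = _
  ring

lemma main_inv (g1 : ℝ → ℝ) (h : ℝ) (hh : 0 < h)
    (hg1C : ContDiff ℝ 3 g1) (hg10 : g1 0 = 0)
    (hg1d : ∀ x > (0:ℝ), 0 < deriv g1 x)
    (hg1dd : ∀ x > (0:ℝ), 0 < deriv (deriv g1) x)
    (u1 : ℝ) (hu : 0 < u1) :
    ∀ m : ℕ,
      ((Vseq g1 h (m+1) u1 - Vseq g1 h m u1) * g1 (Useq g1 h (m+1) u1)
        < (Useq g1 h (m+1) u1 - Useq g1 h m u1)
            * (deriv g1 (Useq g1 h (m+1) u1) * Vseq g1 h (m+1) u1)) ∧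
      ((Vseq g1 h (m+1) u1 - 1) * (Useq g1 h (m+1) u1 - Useq g1 h m u1)
        ≤ (Useq g1 h (m+1) u1 - u1) * (Vseq g1 h (m+1) u1 - Vseq g1 h m u1)) ∧
      (g1 (Useq g1 h (m+1) u1) * deriv g1 u1
        < g1 u1 * (deriv g1 (Useq g1 h (m+1) u1) * Vseq g1 h (m+1) u1)) ∧
      (deriv g1 u1 * (Useq g1 h (m+1) u1 - Useq g1 h m u1)
        ≤ g1 u1 * (Vseq g1 h (m+1) u1 - Vseq g1 h m u1)) ∧
      (u1 ≤ Useq g1 h m u1) ∧ (Useq g1 h m u1 < Useq g1 h (m+1) u1) ∧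
      (1 ≤ Vseq g1 h m u1) ∧ (Vseq g1 h m u1 < Vseq g1 h (m+1) u1) := by
  have hgpos : ∀ y > (0:ℝ), 0 < g1 y := by
    have hs : StrictMonoOn g1 (Set.Ici 0) := by
      apply strictMonoOn_of_deriv_pos (convex_Ici 0) hg1C.continuous.continuousOn
      intro y hy; rw [interior_Ici] at hy; exact hg1d y hy
    intro y hy
    have := hs Set.self_mem_Ici (le_of_lt hy) hy
    rwa [hg10] at this
  have hdmono : StrictMonoOn (deriv g1) (Set.Ici 0) := by
    apply strictMonoOn_of_deriv_pos (convex_Ici 0)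
      (hg1C.continuous_deriv (by norm_num)).continuousOn
    intro y hy; rw [interior_Ici] at hy; exact hg1dd y hy
  have hconv : ∀ a b : ℝ, 0 < a → a < b → g1 b - g1 a < deriv g1 b * (b - a) := by
    intro a b ha hab
    obtain ⟨c, hc, hceq⟩ := exists_deriv_eq_slope g1 hab hg1C.continuous.continuousOn
      ((hg1C.differentiable (by norm_num)).differentiableOn)
    have hcb : deriv g1 c < deriv g1 b :=
      hdmono (le_of_lt (lt_trans ha hc.1)) (le_of_lt (lt_trans ha hab)) hc.2
    have hba : (0:ℝ) < b - a := by linarith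
    have h2 : (g1 b - g1 a) / (b - a) < deriv g1 b := by rw [← hceq]; exact hcb
    calc g1 b - g1 a = (g1 b - g1 a) / (b-a) * (b-a) := by field_simp
      _ < deriv g1 b * (b - a) := mul_lt_mul_of_pos_right h2 hba
  have hdmono' : ∀ a b : ℝ, 0 < a → a ≤ b → deriv g1 a ≤ deriv g1 b := by
    intro a b ha hab
    rcases eq_or_lt_of_le hab with rfl | hlt
    · exact le_refl _
    · exact le_of_lt (hdmono (le_of_lt ha) (le_of_lt (lt_of_lt_of_le ha hab)) hlt)
  have hh2 : 0 < h ^ 2 := pow_pos hh 2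
  have hG : 0 < g1 u1 := hgpos u1 hu
  have hG' : 0 < deriv g1 u1 := hg1d u1 hu
  intro m
  induction m with
  | zero =>
    have hU1 : Useq g1 h 1 u1 = u1 + h ^ 2 / 2 * g1 u1 := rfl
    have hV1 : Vseq g1 h 1 u1 = 1 + h ^ 2 / 2 * deriv g1 u1 := rfl
    have hU0 : Useq g1 h 0 u1 = u1 := rfl
    have hV0 : Vseq g1 h 0 u1 = 1 := rfl
    have hc : 0 < h ^ 2 / 2 := by positivity
    have hsub : Useq g1 h 1 u1 - u1 = h ^ 2 / 2 * g1 u1 := by rw [hU1]; ring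
    have hult : u1 < Useq g1 h 1 u1 := by nlinarith [hsub]
    have hU1pos : 0 < Useq g1 h 1 u1 := lt_trans hu hult
    have hgU : 0 < g1 (Useq g1 h 1 u1) := hgpos _ hU1pos
    have hdU : 0 < deriv g1 (Useq g1 h 1 u1) := hg1d _ hU1pos
    have hlt : deriv g1 u1 < deriv g1 (Useq g1 h 1 u1) :=
      hdmono (le_of_lt hu) (le_of_lt hU1pos) hult
    have hconv0 : g1 (Useq g1 h 1 u1) - g1 u1
        < deriv g1 (Useq g1 h 1 u1) * (h ^ 2 / 2 * g1 u1) := by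
      have := hconv u1 _ hu hult
      rwa [hsub] at this
    have hcmain : g1 (Useq g1 h 1 u1) * deriv g1 u1
        < g1 u1 * (deriv g1 (Useq g1 h 1 u1) * Vseq g1 h 1 u1) := by
      rw [hV1]
      nlinarith [mul_lt_mul_of_pos_left hconv0 hG', mul_pos hG (sub_pos.mpr hlt)]
    refine ⟨?_, ?_, hcmain, ?_, le_refl _, hult, le_refl _, ?_⟩
    · rw [hU0, hV0, hV1, hsub]
      rw [hV1] at hcmain
      nlinarith [mul_lt_mul_of_pos_left hcmain hc]
    · exact le_of_eq (by rw [hU0, hV0, hV1]; ring)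
    · exact le_of_eq (by rw [hU0, hV0, hV1, hsub]; ring)
    · rw [hV0, hV1]; linarith [mul_pos hc hG']
  | succ m ih =>
    obtain ⟨ia, ib, ic, idd, iU, iUlt, iV, iVlt⟩ := ih
    have hUd := Useq_diff g1 h m u1
    have hVd := Vseq_diff g1 h m u1
    simp only [show m + 1 + 1 = m + 2 from rfl]
    have hu1U : u1 < Useq g1 h (m+1) u1 := lt_of_le_of_lt iU iUlt
    have hUpos : 0 < Useq g1 h (m+1) u1 := lt_trans hu hu1U
    have hgU : 0 < g1 (Useq g1 h (m+1) u1) := hgpos _ hUpos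
    have hdU : 0 < deriv g1 (Useq g1 h (m+1) u1) := hg1d _ hUpos
    have hV1 : 1 ≤ Vseq g1 h (m+1) u1 := le_of_lt (lt_of_le_of_lt iV iVlt)
    have hVpos : (0:ℝ) < Vseq g1 h (m+1) u1 := lt_of_lt_of_le one_pos hV1
    have iUlt' : Useq g1 h (m+1) u1 < Useq g1 h (m+2) u1 := by
      have := mul_pos hh2 hgU
      linarith [hUd]
    have iVlt' : Vseq g1 h (m+1) u1 < Vseq g1 h (m+2) u1 := by
      have := mul_pos hh2 (mul_pos hdU hVpos)
      linarith [hVd]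
    have hU2pos : 0 < Useq g1 h (m+2) u1 := lt_trans hUpos iUlt'
    have hgU2 : 0 < g1 (Useq g1 h (m+2) u1) := hgpos _ hU2pos
    have hdU2 : 0 < deriv g1 (Useq g1 h (m+2) u1) := hg1d _ hU2pos
    have hmono1 : deriv g1 (Useq g1 h (m+1) u1) ≤ deriv g1 (Useq g1 h (m+2) u1) :=
      hdmono' _ _ hUpos (le_of_lt iUlt')
    have hconv1 : g1 (Useq g1 h (m+2) u1) - g1 (Useq g1 h (m+1) u1)
        < deriv g1 (Useq g1 h (m+2) u1) * (Useq g1 h (m+2) u1 - Useq g1 h (m+1) u1) :=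
      hconv _ _ hUpos iUlt'
    have hW1pos : 0 < Vseq g1 h (m+2) u1 - Vseq g1 h (m+1) u1 := sub_pos.mpr iVlt'
    have hD1pos : 0 < Useq g1 h (m+2) u1 - Useq g1 h (m+1) u1 := sub_pos.mpr iUlt'
    have hDpos : 0 < Useq g1 h (m+1) u1 - Useq g1 h m u1 := sub_pos.mpr iUlt
    have hpq : (Vseq g1 h (m+2) u1 - Vseq g1 h (m+1) u1) * g1 (Useq g1 h (m+1) u1)
        < (Useq g1 h (m+2) u1 - Useq g1 h (m+1) u1)
          * (deriv g1 (Useq g1 h (m+1) u1) * Vseq g1 h (m+1) u1) := by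
      rw [hUd, hVd]; nlinarith [ia]
    have hpr : (Vseq g1 h (m+1) u1 - Vseq g1 h m u1)
          * (Useq g1 h (m+2) u1 - Useq g1 h (m+1) u1)
        < (Vseq g1 h (m+2) u1 - Vseq g1 h (m+1) u1)
          * (Useq g1 h (m+1) u1 - Useq g1 h m u1) := by
      rw [hUd, hVd]; nlinarith [mul_lt_mul_of_pos_left ia hh2]
    have hamain : (Vseq g1 h (m+2) u1 - Vseq g1 h (m+1) u1) * g1 (Useq g1 h (m+2) u1)
        < (Useq g1 h (m+2) u1 - Useq g1 h (m+1) u1)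
          * (deriv g1 (Useq g1 h (m+2) u1) * Vseq g1 h (m+2) u1) := by
      linarith [mul_lt_mul_of_pos_left hconv1 hW1pos, hpq,
        mul_le_mul_of_nonneg_right hmono1
          (le_of_lt (mul_pos hD1pos hVpos))]
    have hdmain : deriv g1 u1 * (Useq g1 h (m+2) u1 - Useq g1 h (m+1) u1)
        ≤ g1 u1 * (Vseq g1 h (m+2) u1 - Vseq g1 h (m+1) u1) := by
      rw [hUd, hVd]; nlinarith [idd, mul_lt_mul_of_pos_left ic hh2]
    have hcmain : g1 (Useq g1 h (m+2) u1) * deriv g1 u1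
        < g1 u1 * (deriv g1 (Useq g1 h (m+2) u1) * Vseq g1 h (m+2) u1) := by
      linarith [mul_lt_mul_of_pos_right hconv1 hG', ic,
        mul_le_mul_of_nonneg_right hdmain (le_of_lt hdU2),
        mul_le_mul_of_nonneg_right hmono1 (le_of_lt (mul_pos hG hVpos))]
    have hbmain : (Vseq g1 h (m+2) u1 - 1) * (Useq g1 h (m+2) u1 - Useq g1 h (m+1) u1)
        ≤ (Useq g1 h (m+2) u1 - u1) * (Vseq g1 h (m+2) u1 - Vseq g1 h (m+1) u1) := by
      have hEpos : 0 < Useq g1 h (m+1) u1 - u1 := sub_pos.mpr hu1U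
      have hE'nn : 0 ≤ Vseq g1 h (m+1) u1 - 1 := by linarith
      have k1 := mul_le_mul_of_nonneg_right ib (le_of_lt hD1pos)
      have k2 := mul_lt_mul_of_pos_left hpr hEpos
      have k3 : ((Vseq g1 h (m+1) u1 - 1) * (Useq g1 h (m+2) u1 - Useq g1 h (m+1) u1))
            * (Useq g1 h (m+1) u1 - Useq g1 h m u1)
          < ((Useq g1 h (m+1) u1 - u1) * (Vseq g1 h (m+2) u1 - Vseq g1 h (m+1) u1))
            * (Useq g1 h (m+1) u1 - Useq g1 h m u1) := by linarith [k1, k2]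
      have key := le_of_lt (lt_of_mul_lt_mul_right k3 (le_of_lt hDpos))
      linarith [key]
    exact ⟨hamain, hbmain, hcmain, hdmain, le_of_lt hu1U, iUlt', hV1, iVlt'⟩

lemma Useq_hasDerivAt (g1 : ℝ → ℝ) (h : ℝ) (hg : Differentiable ℝ g1) (x : ℝ) :
    ∀ k, HasDerivAt (Useq g1 h k) (Vseq g1 h k x) x := by
  have key : ∀ k, HasDerivAt (Useq g1 h k) (Vseq g1 h k x) x ∧
      HasDerivAt (Useq g1 h (k + 1)) (Vseq g1 h (k + 1) x) x := by
    intro k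
    induction k with
    | zero =>
      constructor
      · simpa [Useq, Vseq] using (hasDerivAt_id' x)
      · have h1 : HasDerivAt (fun y : ℝ => y + h ^ 2 / 2 * g1 y)
            (1 + h ^ 2 / 2 * deriv g1 x) x :=
          (hasDerivAt_id x).add (((hg x).hasDerivAt).const_mul (h ^ 2 / 2))
        simpa [Useq, Vseq] using h1
    | succ k ih =>
      refine ⟨ih.2, ?_⟩
      have h1 : HasDerivAt (fun y => 2 * Useq g1 h (k + 1) y - Useq g1 h k y +
          h ^ 2 * g1 (Useq g1 h (k + 1) y))
          (2 * Vseq g1 h (k + 1) x - Vseq g1 h k x +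
            h ^ 2 * (deriv g1 (Useq g1 h (k + 1) x) * Vseq g1 h (k + 1) x)) x :=
        ((ih.2.const_mul 2).sub ih.1).add
          ((((hg (Useq g1 h (k + 1) x)).hasDerivAt).comp x ih.2).const_mul (h ^ 2))
      exact h1
  exact fun k => (key k).1

theorem stmt_1 (n : ℕ) (hn : 2 ≤ n) (h : ℝ) (hh : h = 1 / ((n : ℝ) - 1))
    (g1 g2 : ℝ → ℝ)
    (hg1C : ContDiff ℝ 3 g1) (hg2C : ContDiff ℝ 3 g2)
    (hg10 : g1 0 = 0) (hg20 : g2 0 = 0)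
    (hg1d : ∀ x > (0:ℝ), 0 < deriv g1 x) (hg2d : ∀ x > (0:ℝ), 0 < deriv g2 x)
    (hg1dd : ∀ x > (0:ℝ), 0 < deriv (deriv g1) x)
    (hg2dd : ∀ x > (0:ℝ), 0 < deriv (deriv g2) x)
    (hg1ddd : ∀ x > (0:ℝ), 0 ≤ deriv (deriv (deriv g1)) x)
    (hg2ddd : ∀ x > (0:ℝ), 0 ≤ deriv (deriv (deriv g2)) x) :
    ∀ u1 : ℝ, 0 < u1 → ∀ k, 2 ≤ k → k ≤ n →
      deriv (fun x => (discU g1 h k x - discU g1 h (k - 1) x) / g1 (discU g1 h k x)) u1 < 0 ∧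
      deriv (fun x => (discU g1 h k x - discU g1 h 1 x) / g1 (discU g1 h k x)) u1 < 0 ∧
      0 ≤ deriv (fun x =>
            (discU g1 h k x - discU g1 h (k - 1) x) / (discU g1 h k x - discU g1 h 1 x)) u1 ∧
      0 < deriv (fun x => g1 (discU g1 h k x) / g1 (discU g1 h 1 x)) u1 := by
  have hhpos : 0 < h := by
    have h2n : (2:ℝ) ≤ (n:ℝ) := by exact_mod_cast hn
    have h1 : (0:ℝ) < (n:ℝ) - 1 := by linarith
    rw [hh]; positivity
  intro u1 hu k hk2 hkn
  obtain ⟨m, rfl⟩ : ∃ m, k = m + 2 := ⟨k - 2, by omega⟩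
  obtain ⟨ia, ib, ic, idd, iU, iUlt, iV, iVlt⟩ :=
    main_inv g1 h hhpos hg1C hg10 hg1d hg1dd u1 hu m
  have hdiff : Differentiable ℝ g1 := hg1C.differentiable (by norm_num)
  have hd := Useq_hasDerivAt g1 h hdiff u1
  have hu1U : u1 < Useq g1 h (m+1) u1 := lt_of_le_of_lt iU iUlt
  have hUpos : 0 < Useq g1 h (m+1) u1 := lt_trans hu hu1U
  have hs : StrictMonoOn g1 (Set.Ici 0) := by
    apply strictMonoOn_of_deriv_pos (convex_Ici 0) hg1C.continuous.continuousOn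
    intro y hy; rw [interior_Ici] at hy; exact hg1d y hy
  have hgU : 0 < g1 (Useq g1 h (m+1) u1) := by
    have := hs Set.self_mem_Ici (le_of_lt hUpos) hUpos
    rwa [hg10] at this
  have hG : 0 < g1 u1 := by
    have := hs Set.self_mem_Ici (le_of_lt hu) hu
    rwa [hg10] at this
  have hEpos : 0 < Useq g1 h (m+1) u1 - u1 := sub_pos.mpr hu1U
  have hDpos : 0 < Useq g1 h (m+1) u1 - Useq g1 h m u1 := sub_pos.mpr iUlt
  have h1num : HasDerivAt (fun x => Useq g1 h (m+1) x - Useq g1 h m x)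
      (Vseq g1 h (m+1) u1 - Vseq g1 h m u1) u1 := (hd (m+1)).sub (hd m)
  have h2num : HasDerivAt (fun x => Useq g1 h (m+1) x - Useq g1 h 0 x)
      (Vseq g1 h (m+1) u1 - Vseq g1 h 0 u1) u1 := (hd (m+1)).sub (hd 0)
  have hden : HasDerivAt (fun x => g1 (Useq g1 h (m+1) x))
      (deriv g1 (Useq g1 h (m+1) u1) * Vseq g1 h (m+1) u1) u1 :=
    ((hdiff (Useq g1 h (m+1) u1)).hasDerivAt).comp u1 (hd (m+1))
  have hden0 : HasDerivAt (fun x => g1 (Useq g1 h 0 x))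
      (deriv g1 (Useq g1 h 0 u1) * Vseq g1 h 0 u1) u1 :=
    ((hdiff (Useq g1 h 0 u1)).hasDerivAt).comp u1 (hd 0)
  refine ⟨?_, ?_, ?_, ?_⟩
  · have key : HasDerivAt
        (fun x => (discU g1 h (m + 2) x - discU g1 h (m + 2 - 1) x) / g1 (discU g1 h (m + 2) x))
        (((Vseq g1 h (m+1) u1 - Vseq g1 h m u1) * g1 (Useq g1 h (m+1) u1)
          - (Useq g1 h (m+1) u1 - Useq g1 h m u1)
            * (deriv g1 (Useq g1 h (m+1) u1) * Vseq g1 h (m+1) u1))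
          / g1 (Useq g1 h (m+1) u1) ^ 2) u1 :=
      h1num.div hden (ne_of_gt hgU)
    rw [key.deriv]
    apply div_neg_of_neg_of_pos
    · linarith [ia]
    · exact pow_pos hgU 2
  · have key : HasDerivAt
        (fun x => (discU g1 h (m + 2) x - discU g1 h 1 x) / g1 (discU g1 h (m + 2) x))
        (((Vseq g1 h (m+1) u1 - Vseq g1 h 0 u1) * g1 (Useq g1 h (m+1) u1)
          - (Useq g1 h (m+1) u1 - Useq g1 h 0 u1)
            * (deriv g1 (Useq g1 h (m+1) u1) * Vseq g1 h (m+1) u1))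
          / g1 (Useq g1 h (m+1) u1) ^ 2) u1 :=
      h2num.div hden (ne_of_gt hgU)
    rw [key.deriv]
    apply div_neg_of_neg_of_pos
    · have hV0 : Vseq g1 h 0 u1 = 1 := rfl
      have hU0 : Useq g1 h 0 u1 = u1 := rfl
      rw [hV0, hU0]
      have k1 := mul_le_mul_of_nonneg_right ib (le_of_lt hgU)
      have k2 := mul_lt_mul_of_pos_left ia hEpos
      have k3 : ((Vseq g1 h (m+1) u1 - 1) * g1 (Useq g1 h (m+1) u1))
            * (Useq g1 h (m+1) u1 - Useq g1 h m u1)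
          < ((Useq g1 h (m+1) u1 - u1)
              * (deriv g1 (Useq g1 h (m+1) u1) * Vseq g1 h (m+1) u1))
            * (Useq g1 h (m+1) u1 - Useq g1 h m u1) := by linarith [k1, k2]
      have key2 := lt_of_mul_lt_mul_right k3 (le_of_lt hDpos)
      linarith [key2]
    · exact pow_pos hgU 2
  · have key : HasDerivAt
        (fun x => (discU g1 h (m + 2) x - discU g1 h (m + 2 - 1) x)
          / (discU g1 h (m + 2) x - discU g1 h 1 x))
        (((Vseq g1 h (m+1) u1 - Vseq g1 h m u1) * (Useq g1 h (m+1) u1 - Useq g1 h 0 u1)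
          - (Useq g1 h (m+1) u1 - Useq g1 h m u1) * (Vseq g1 h (m+1) u1 - Vseq g1 h 0 u1))
          / (Useq g1 h (m+1) u1 - Useq g1 h 0 u1) ^ 2) u1 :=
      h1num.div h2num (ne_of_gt hEpos)
    rw [key.deriv]
    apply div_nonneg
    · have hV0 : Vseq g1 h 0 u1 = 1 := rfl
      have hU0 : Useq g1 h 0 u1 = u1 := rfl
      rw [hV0, hU0]
      linarith [ib]
    · have hU0 : Useq g1 h 0 u1 = u1 := rfl
      rw [hU0]
      exact le_of_lt (pow_pos hEpos 2)
  · have key : HasDerivAt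
        (fun x => g1 (discU g1 h (m + 2) x) / g1 (discU g1 h 1 x))
        ((deriv g1 (Useq g1 h (m+1) u1) * Vseq g1 h (m+1) u1 * g1 (Useq g1 h 0 u1)
          - g1 (Useq g1 h (m+1) u1) * (deriv g1 (Useq g1 h 0 u1) * Vseq g1 h 0 u1))
          / g1 (Useq g1 h 0 u1) ^ 2) u1 :=
      hden.div hden0 (ne_of_gt hG)
    rw [key.deriv]
    apply div_pos
    · have hV0 : Vseq g1 h 0 u1 = 1 := rfl
      have hU0 : Useq g1 h 0 u1 = u1 := rfl
      rw [hV0, hU0]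
      linarith [ic]
    · have hU0 : Useq g1 h 0 u1 = u1 := rfl
      rw [hU0]
      exact pow_pos hG 2
end
end

section
/- Let x > 0. Then: (i) the derivative of t ↦ g₁²(t)/G₁(t) at x is strictly positive; (ii) if the derivative of t ↦ G₁(t)/g₂²(t) at x is strictly positive, then the derivative of t ↦ g₁(t)/g₂(t) at x is strictly positive; (iii) if there exists d ∈ [0,1) such that d·g₁(x)/G₁(x) − 2g₂′(x)/g₂(x) ≥ 0 (i.e. the logarithmic derivative of G₁^d/g₂² at x is nonnegative), then the derivative of t ↦ G₁(t)/g₂²(t) at x is strictly positive. -/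
noncomputable section

open Set in
theorem stmt_2
    (g1 g2 : ℝ → ℝ)
    (hg1C : ContDiff ℝ 3 g1) (hg2C : ContDiff ℝ 3 g2)
    (hg10 : g1 0 = 0) (hg20 : g2 0 = 0)
    (hg1d : ∀ x > (0:ℝ), 0 < deriv g1 x) (hg2d : ∀ x > (0:ℝ), 0 < deriv g2 x)
    (hg1dd : ∀ x > (0:ℝ), 0 < deriv (deriv g1) x)
    (hg2dd : ∀ x > (0:ℝ), 0 < deriv (deriv g2) x)
    (hg1ddd : ∀ x > (0:ℝ), 0 ≤ deriv (deriv (deriv g1)) x)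
    (hg2ddd : ∀ x > (0:ℝ), 0 ≤ deriv (deriv (deriv g2)) x)
    (x : ℝ) (hx : 0 < x) :
    0 < deriv (fun t => (g1 t) ^ 2 / primG1 g1 t) x ∧
    (0 < deriv (fun t => primG1 g1 t / (g2 t) ^ 2) x →
      0 < deriv (fun t => g1 t / g2 t) x) ∧
    ((∃ d : ℝ, 0 ≤ d ∧ d < 1 ∧
        0 ≤ d * g1 x / primG1 g1 x - 2 * deriv g2 x / g2 x) →
      0 < deriv (fun t => primG1 g1 t / (g2 t) ^ 2) x) := by
  have hprim : primG1 g1 = fun x => ∫ t in (0:ℝ)..x, g1 t := rfl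
  have hg1cont : Continuous g1 := hg1C.continuous
  have hg2cont : Continuous g2 := hg2C.continuous
  have hg1diff : Differentiable ℝ g1 := hg1C.differentiable (by norm_num)
  have hg2diff : Differentiable ℝ g2 := hg2C.differentiable (by norm_num)
  have hdg1C : ContDiff ℝ 2 (deriv g1) := by
    rw [show (3 : WithTop ℕ∞) = 2 + 1 from rfl, contDiff_succ_iff_deriv] at hg1C
    exact hg1C.2.2
  have hdg1diff : Differentiable ℝ (deriv g1) := hdg1C.differentiable (by norm_num)
  -- positivity of g1, g2 on (0, ∞)
  have hpos : ∀ g : ℝ → ℝ, Continuous g → g 0 = 0 → (∀ t > (0:ℝ), 0 < deriv g t) →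
      ∀ t > (0:ℝ), 0 < g t := by
    intro g hc h0 hd t ht
    have hmono : StrictMonoOn g (Ici 0) := by
      apply strictMonoOn_of_deriv_pos (convex_Ici 0) hc.continuousOn
      intro s hs
      rw [interior_Ici] at hs
      exact hd s hs
    have := hmono (self_mem_Ici) (le_of_lt ht) ht
    rwa [h0] at this
  have hg1pos : ∀ t > (0:ℝ), 0 < g1 t := hpos g1 hg1cont hg10 hg1d
  have hg2pos : ∀ t > (0:ℝ), 0 < g2 t := hpos g2 hg2cont hg20 hg2d
  -- primitive facts
  have hG1d : ∀ t : ℝ, HasDerivAt (primG1 g1) (g1 t) t := by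
    intro t
    rw [hprim]
    exact intervalIntegral.integral_hasDerivAt_right (hg1cont.intervalIntegrable _ _)
      (hg1cont.stronglyMeasurableAtFilter _ _) hg1cont.continuousAt
  have hG10 : primG1 g1 0 = 0 := by rw [hprim]; simp
  have hG1diff : Differentiable ℝ (primG1 g1) := fun t => (hG1d t).differentiableAt
  have hG1cont : Continuous (primG1 g1) := hG1diff.continuous
  have hG1pos : ∀ t > (0:ℝ), 0 < primG1 g1 t := by
    intro t ht
    rw [hprim]
    exact intervalIntegral.intervalIntegral_pos_of_pos_on
      (hg1cont.intervalIntegrable _ _) (fun s hs => hg1pos s hs.1) ht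
  -- key inequality: 2 g1' G1 > g1^2 on (0, ∞)
  have key : 0 < 2 * deriv g1 x * primG1 g1 x - g1 x ^ 2 := by
    set F : ℝ → ℝ := fun t => 2 * deriv g1 t * primG1 g1 t - g1 t ^ 2 with hF
    have hFd : ∀ t : ℝ, HasDerivAt F
        (2 * deriv (deriv g1) t * primG1 g1 t) t := by
      intro t
      have h1 : HasDerivAt (fun s => 2 * deriv g1 s * primG1 g1 s - g1 s ^ 2)
          ((2 * deriv (deriv g1) t) * primG1 g1 t + (2 * deriv g1 t) * g1 t
            - (2 : ℕ) * g1 t ^ (2 - 1) * deriv g1 t) t := by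
        exact ((((hdg1diff t).hasDerivAt).const_mul 2).mul (hG1d t)).sub
          (((hg1diff t).hasDerivAt).pow 2)
      convert h1 using 1
      ring
    have hFmono : StrictMonoOn F (Ici 0) := by
      apply strictMonoOn_of_deriv_pos (convex_Ici 0)
      · exact (((continuous_const.mul hdg1C.continuous).mul hG1cont).sub
          (hg1cont.pow 2)).continuousOn
      · intro s hs
        rw [interior_Ici] at hs
        rw [(hFd s).deriv]
        have := hg1dd s hs
        have := hG1pos s hs
        positivity
    have hF0 : F 0 = 0 := by simp [hF, hG10, hg10]
    have := hFmono (self_mem_Ici) (le_of_lt hx) hx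
    rw [hF0] at this
    simpa [hF] using this
  have hG1x := hG1pos x hx
  have hg1x := hg1pos x hx
  have hg2x := hg2pos x hx
  have hg2dx := hg2d x hx
  -- derivative computations
  have hD1 : HasDerivAt (fun t => g1 t ^ 2 / primG1 g1 t)
      ((2 * g1 x * deriv g1 x * primG1 g1 x - g1 x ^ 2 * g1 x) /
        (primG1 g1 x) ^ 2) x := by
    have := (((hg1diff x).hasDerivAt).pow 2).div (hG1d x) hG1x.ne'
    refine this.congr_deriv ?_
    simp only [Pi.pow_apply]
    push_cast
    ring
  have hD2 : HasDerivAt (fun t => primG1 g1 t / g2 t ^ 2)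
      ((g1 x * g2 x ^ 2 - primG1 g1 x * (2 * g2 x * deriv g2 x)) /
        (g2 x ^ 2) ^ 2) x := by
    have := (hG1d x).div (((hg2diff x).hasDerivAt).pow 2) (pow_ne_zero 2 hg2x.ne')
    refine this.congr_deriv ?_
    simp only [Pi.pow_apply]
    push_cast
    ring
  have hD3 : HasDerivAt (fun t => g1 t / g2 t)
      ((deriv g1 x * g2 x - g1 x * deriv g2 x) / g2 x ^ 2) x :=
    ((hg1diff x).hasDerivAt).div ((hg2diff x).hasDerivAt) hg2x.ne'
  refine ⟨?_, ?_, ?_⟩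
  · rw [hD1.deriv]
    apply div_pos
    · nlinarith [key, hg1x]
    · positivity
  · intro hyp
    rw [hD2.deriv] at hyp
    have hnum : 0 < g1 x * g2 x ^ 2 - primG1 g1 x * (2 * g2 x * deriv g2 x) := by
      rcases div_pos_iff.mp hyp with ⟨h, _⟩ | ⟨_, h⟩
      · exact h
      · nlinarith [pow_pos (pow_pos hg2x 2) 2]
    rw [hD3.deriv]
    apply div_pos
    · nlinarith [mul_pos hG1x hg2x, mul_pos (mul_pos hg2x hg2x) key, mul_pos hg1x hnum]
    · positivity
  · rintro ⟨d, hd0, hd1, hdineq⟩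
    rw [hD2.deriv]
    have h2 : 2 * deriv g2 x / g2 x ≤ d * g1 x / primG1 g1 x := by linarith
    have h3 : 2 * deriv g2 x * primG1 g1 x ≤ d * g1 x * g2 x :=
      (div_le_div_iff₀ hg2x hG1x).mp h2
    have hA : 2 * deriv g2 x * primG1 g1 x < g1 x * g2 x := by
      nlinarith [mul_pos hg1x hg2x]
    apply div_pos
    · nlinarith [mul_lt_mul_of_pos_right hA hg2x]
    · positivity
end
end

section
/- For every u₁ > 0 and every m with 2 ≤ m ≤ n, writing u_k := U_k(u₁) for 1 ≤ k ≤ n, the following identity holds: ½((u_m − u_{m−1})/h)² = Σ_{k=1}^{m−1} ((g₁(u_{k+1}) + g₁(u_k))/2)(u_{k+1} − u_k) − (g₁(u₁)/4)(u₂ − u₁) − (g₁(u_m)/2)(u_m − u_{m−1}). -/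
noncomputable section

theorem stmt_3 (n : ℕ) (hn : 2 ≤ n) (h : ℝ) (hh : h = 1 / ((n : ℝ) - 1))
    (g1 g2 : ℝ → ℝ)
    (hg1C : ContDiff ℝ 3 g1) (hg2C : ContDiff ℝ 3 g2)
    (hg10 : g1 0 = 0) (hg20 : g2 0 = 0)
    (hg1d : ∀ x > (0:ℝ), 0 < deriv g1 x) (hg2d : ∀ x > (0:ℝ), 0 < deriv g2 x)
    (hg1dd : ∀ x > (0:ℝ), 0 < deriv (deriv g1) x)
    (hg2dd : ∀ x > (0:ℝ), 0 < deriv (deriv g2) x)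
    (hg1ddd : ∀ x > (0:ℝ), 0 ≤ deriv (deriv (deriv g1)) x)
    (hg2ddd : ∀ x > (0:ℝ), 0 ≤ deriv (deriv (deriv g2)) x) :
    ∀ u1 : ℝ, 0 < u1 → ∀ m, 2 ≤ m → m ≤ n →
      1 / 2 * ((discU g1 h m u1 - discU g1 h (m - 1) u1) / h) ^ 2 =
        (∑ k ∈ Finset.Icc 1 (m - 1),
          (g1 (discU g1 h (k + 1) u1) + g1 (discU g1 h k u1)) / 2 *
            (discU g1 h (k + 1) u1 - discU g1 h k u1))
        - g1 (discU g1 h 1 u1) / 4 * (discU g1 h 2 u1 - discU g1 h 1 u1)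
        - g1 (discU g1 h m u1) / 2 * (discU g1 h m u1 - discU g1 h (m - 1) u1) := by
  have hn1 : (1:ℝ) ≤ (n:ℝ) - 1 := by
    have : (2:ℝ) ≤ (n:ℝ) := by exact_mod_cast hn
    linarith
  have hne : h ≠ 0 := by
    rw [hh]; positivity
  intro u1 hu1 m hm2 hmn
  induction m, hm2 using Nat.le_induction with
  | base =>
    simp only [discU, Useq, Finset.Icc_self, Finset.sum_singleton]
    field_simp
    rw [show Useq g1 h 1 u1 = u1 + h ^ 2 / 2 * g1 u1 from rfl, show Useq g1 h 0 u1 = u1 from rfl]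
    ring
  | succ m hm2 ih =>
    have ih' := ih (le_trans (Nat.le_succ m) hmn)
    have hrec : discU g1 h (m + 1) u1 =
        2 * discU g1 h m u1 - discU g1 h (m - 1) u1 + h ^ 2 * g1 (discU g1 h m u1) := by
      obtain ⟨j, rfl⟩ := Nat.exists_eq_add_of_le hm2
      simp only [discU, show 2 + j + 1 - 1 = j + 2 from by omega,
        show 2 + j - 1 = j + 1 from by omega, show 2 + j - 1 - 1 = j from by omega, Useq, Nat.add_sub_cancel]
    have hm1 : 1 ≤ m := le_trans (by norm_num) hm2
    have hsum : (∑ k ∈ Finset.Icc 1 (m + 1 - 1),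
          (g1 (discU g1 h (k + 1) u1) + g1 (discU g1 h k u1)) / 2 *
            (discU g1 h (k + 1) u1 - discU g1 h k u1)) =
        (∑ k ∈ Finset.Icc 1 (m - 1),
          (g1 (discU g1 h (k + 1) u1) + g1 (discU g1 h k u1)) / 2 *
            (discU g1 h (k + 1) u1 - discU g1 h k u1)) +
        (g1 (discU g1 h (m + 1) u1) + g1 (discU g1 h m u1)) / 2 *
            (discU g1 h (m + 1) u1 - discU g1 h m u1) := by
      rw [Nat.add_sub_cancel, ← Nat.succ_pred_eq_of_pos (show 0 < m by omega),
        Finset.sum_Icc_succ_top (by omega : 1 ≤ m.pred + 1)]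
      congr 2 <;> omega
    have hS : (∑ k ∈ Finset.Icc 1 (m - 1),
          (g1 (discU g1 h (k + 1) u1) + g1 (discU g1 h k u1)) / 2 *
            (discU g1 h (k + 1) u1 - discU g1 h k u1)) =
        1 / 2 * ((discU g1 h m u1 - discU g1 h (m - 1) u1) / h) ^ 2
        + g1 (discU g1 h 1 u1) / 4 * (discU g1 h 2 u1 - discU g1 h 1 u1)
        + g1 (discU g1 h m u1) / 2 * (discU g1 h m u1 - discU g1 h (m - 1) u1) := by
      linarith [ih']
    rw [Nat.add_sub_cancel] at *
    rw [hsum, hS, hrec]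
    field_simp
    ring
end
end

section
/- Let α > 0 and let (u₁,…,u_n) ∈ (0,∞)ⁿ be a positive solution of the discrete system (Sα). Then α·g₂(u_n) < g₁(u_n). -/
noncomputable section

theorem stmt_5 (n : ℕ) (hn : 2 ≤ n) (h : ℝ) (hh : h = 1 / ((n : ℝ) - 1))
    (g1 g2 : ℝ → ℝ)
    (hg1C : ContDiff ℝ 3 g1) (hg2C : ContDiff ℝ 3 g2)
    (hg10 : g1 0 = 0) (hg20 : g2 0 = 0)
    (hg1d : ∀ x > (0:ℝ), 0 < deriv g1 x) (hg2d : ∀ x > (0:ℝ), 0 < deriv g2 x)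
    (hg1dd : ∀ x > (0:ℝ), 0 < deriv (deriv g1) x)
    (hg2dd : ∀ x > (0:ℝ), 0 < deriv (deriv g2) x)
    (hg1ddd : ∀ x > (0:ℝ), 0 ≤ deriv (deriv (deriv g1)) x)
    (hg2ddd : ∀ x > (0:ℝ), 0 ≤ deriv (deriv (deriv g2)) x)
    (α : ℝ) (hα : 0 < α) (u : ℕ → ℝ) (hu : IsSolution g1 g2 n h α u) :
    α * g2 (u n) < g1 (u n) := by
  obtain ⟨hpos, heq1, heqmid, heqn⟩ := hu
  have hn1 : (1:ℝ) ≤ (n:ℝ) - 1 := by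
    have : (2:ℝ) ≤ (n:ℝ) := by exact_mod_cast hn
    linarith
  have hhpos : 0 < h := by rw [hh]; positivity
  -- g1 strictly monotone on [0,∞)
  have hg1mono : StrictMonoOn g1 (Set.Ici (0:ℝ)) := by
    apply strictMonoOn_of_deriv_pos (convex_Ici 0)
      (hg1C.continuous.continuousOn)
    intro x hx
    rw [interior_Ici] at hx
    exact hg1d x hx
  have hg1pos : ∀ x : ℝ, 0 < x → 0 < g1 x := by
    intro x hx
    have := hg1mono (Set.self_mem_Ici) (Set.mem_Ici.2 hx.le) hx
    rwa [hg10] at this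
  -- difference formula
  have hdiff : ∀ k, 1 ≤ k → k ≤ n - 1 →
      u (k+1) - u k = h^2/2 * g1 (u 1) + h^2 * ∑ j ∈ Finset.Icc 2 k, g1 (u j) := by
    intro k
    induction k with
    | zero => omega
    | succ m ih =>
      intro h1 h2
      rcases Nat.eq_or_lt_of_le h1 with he | hlt
      · -- m + 1 = 1
        have hm : m = 0 := by omega
        subst hm
        simp [heq1]
      · have hm1 : 1 ≤ m := by omega
        have hm2 : m ≤ n - 1 := by omega
        have ihm := ih hm1 hm2
        have hmid := heqmid (m+1) (by omega) h2
        have hsum : ∑ j ∈ Finset.Icc 2 (m+1), g1 (u j)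
            = (∑ j ∈ Finset.Icc 2 m, g1 (u j)) + g1 (u (m+1)) := by
          rw [← Finset.sum_Icc_succ_top (by omega : 2 ≤ m+1)]
        have hrw : (m + 1 : ℕ) - 1 = m := by omega
        rw [hrw] at hmid
        rw [hsum]
        have : u (m+1+1) - u (m+1) = (u (m+1) - u m) + h^2 * g1 (u (m+1)) := by
          linarith
        rw [this, ihm]; ring
  -- positivity of sum terms
  have hsumnn : ∀ k, k ≤ n - 1 → 0 ≤ ∑ j ∈ Finset.Icc 2 k, g1 (u j) := by
    intro k hk
    apply Finset.sum_nonneg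
    intro j hj
    simp only [Finset.mem_Icc] at hj
    exact (hg1pos _ (hpos j (by omega) (by omega))).le
  have hstep : ∀ k, 1 ≤ k → k ≤ n - 1 → u k < u (k+1) := by
    intro k h1 h2
    have hd := hdiff k h1 h2
    have h1pos : 0 < g1 (u 1) := hg1pos _ (hpos 1 le_rfl (by omega))
    have hnn := hsumnn k h2
    nlinarith [mul_pos (pow_pos hhpos 2) h1pos, mul_nonneg (pow_pos hhpos 2).le hnn]
  -- monotonicity up to n
  have hle : ∀ m k, 1 ≤ k → k ≤ m → m ≤ n → u k ≤ u m := by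
    intro m
    induction m with
    | zero => intro k h1 h2 _; omega
    | succ m ih =>
      intro k h1 h2 h3
      rcases Nat.eq_or_lt_of_le h2 with he | hlt
      · rw [he]
      · have hk : k ≤ m := by omega
        have hm1 : 1 ≤ m := by omega
        have := hstep m hm1 (by omega)
        have := ih k h1 hk (by omega)
        linarith
  have h1lt : u 1 < u n := by
    have h12 : u 1 < u 2 := hstep 1 le_rfl (by omega)
    have h2n : u 2 ≤ u n := hle n 2 (by omega) hn le_rfl
    linarith
  -- final formula
  have hneq : n - 1 + 1 = n := by omega
  have hdn := hdiff (n-1) (by omega) le_rfl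
  rw [hneq] at hdn
  set S : ℝ := g1 (u 1)/2 + (∑ j ∈ Finset.Icc 2 (n-1), g1 (u j)) + g1 (u n)/2 with hS
  have heq : h * (α * g2 (u n)) = h * (h * S) := by
    have := heqn
    rw [hS]
    nlinarith [hdn]
  have hAS : α * g2 (u n) = h * S := mul_left_cancel₀ (ne_of_gt hhpos) heq
  -- bound S
  have hcard : (Finset.Icc 2 (n-1)).card = n - 2 := by
    rw [Nat.card_Icc]; omega
  have hsumle : ∑ j ∈ Finset.Icc 2 (n-1), g1 (u j) ≤ ((n:ℝ) - 2) * g1 (u n) := by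
    have hb : ∀ j ∈ Finset.Icc 2 (n-1), g1 (u j) ≤ g1 (u n) := by
      intro j hj
      simp only [Finset.mem_Icc] at hj
      have hjn : u j ≤ u n := hle n j (by omega) (by omega) le_rfl
      exact hg1mono.monotoneOn (Set.mem_Ici.2 (hpos j (by omega) (by omega)).le)
        (Set.mem_Ici.2 (hpos n (by omega) le_rfl).le) hjn
    calc ∑ j ∈ Finset.Icc 2 (n-1), g1 (u j)
        ≤ (Finset.Icc 2 (n-1)).card • g1 (u n) := Finset.sum_le_card_nsmul _ _ _ hb
      _ = ((n - 2 : ℕ) : ℝ) * g1 (u n) := by rw [hcard, nsmul_eq_mul]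
      _ = ((n:ℝ) - 2) * g1 (u n) := by
          congr 1
          have : ((n - 2 : ℕ) : ℝ) = (n:ℝ) - 2 := by
            have : (2:ℕ) ≤ n := hn
            push_cast [Nat.cast_sub this]
            ring
          exact this
  have hg1lt : g1 (u 1) < g1 (u n) :=
    hg1mono (Set.mem_Ici.2 (hpos 1 le_rfl (by omega)).le)
      (Set.mem_Ici.2 (hpos n (by omega) le_rfl).le) h1lt
  have hSlt : S < ((n:ℝ) - 1) * g1 (u n) := by
    rw [hS]; nlinarith
  have hfin : h * ((n:ℝ) - 1) = 1 := by
    rw [hh]; field_simp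
  calc α * g2 (u n) = h * S := hAS
    _ < h * (((n:ℝ) - 1) * g1 (u n)) := by
        exact mul_lt_mul_of_pos_left hSlt hhpos
    _ = g1 (u n) := by rw [← mul_assoc, hfin, one_mul]
end
end

section
/- Let α > 0 and let (u₁,…,u_n) ∈ (0,∞)ⁿ be a positive solution of the discrete system (Sα). If the function g := g₁/g₂ is a strictly increasing bijection of (0,∞) onto (0,∞), then u_n > g⁻¹(α). -/
noncomputable section

theorem stmt_6 (n : ℕ) (hn : 2 ≤ n) (h : ℝ) (hh : h = 1 / ((n : ℝ) - 1))
    (g1 g2 : ℝ → ℝ)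
    (hg1C : ContDiff ℝ 3 g1) (hg2C : ContDiff ℝ 3 g2)
    (hg10 : g1 0 = 0) (hg20 : g2 0 = 0)
    (hg1d : ∀ x > (0:ℝ), 0 < deriv g1 x) (hg2d : ∀ x > (0:ℝ), 0 < deriv g2 x)
    (hg1dd : ∀ x > (0:ℝ), 0 < deriv (deriv g1) x)
    (hg2dd : ∀ x > (0:ℝ), 0 < deriv (deriv g2) x)
    (hg1ddd : ∀ x > (0:ℝ), 0 ≤ deriv (deriv (deriv g1)) x)
    (hg2ddd : ∀ x > (0:ℝ), 0 ≤ deriv (deriv (deriv g2)) x)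
    (α : ℝ) (hα : 0 < α) (u : ℕ → ℝ) (hu : IsSolution g1 g2 n h α u)
    (hgmono : StrictMonoOn (gg g1 g2) (Set.Ioi 0))
    (hgbij : Set.BijOn (gg g1 g2) (Set.Ioi 0) (Set.Ioi 0))
    (ginv : ℝ → ℝ)
    (hginv : ∀ y ∈ Set.Ioi (0:ℝ), ginv y ∈ Set.Ioi 0 ∧ gg g1 g2 (ginv y) = y) :
    ginv α < u n := by
  obtain ⟨hupos, heq1, heqmid, heqlast⟩ := hu
  have hn1 : (1:ℝ) ≤ (n:ℝ) - 1 := by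
    have : (2:ℝ) ≤ (n:ℝ) := by exact_mod_cast hn
    linarith
  have hhpos : 0 < h := by rw [hh]; positivity
  have hhn : h * ((n:ℝ) - 1) = 1 := by
    rw [hh]; field_simp
  -- monotonicity of g1 and g2 on [0,∞)
  have hg1mono : StrictMonoOn g1 (Set.Ici 0) := by
    apply strictMonoOn_of_deriv_pos (convex_Ici 0) hg1C.continuous.continuousOn
    intro x hx
    rw [interior_Ici] at hx
    exact hg1d x hx
  have hg2mono : StrictMonoOn g2 (Set.Ici 0) := by
    apply strictMonoOn_of_deriv_pos (convex_Ici 0) hg2C.continuous.continuousOn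
    intro x hx
    rw [interior_Ici] at hx
    exact hg2d x hx
  have hg1pos : ∀ x > (0:ℝ), 0 < g1 x := by
    intro x hx
    have := hg1mono (Set.self_mem_Ici) (le_of_lt hx) hx
    rwa [hg10] at this
  have hg2pos : ∀ x > (0:ℝ), 0 < g2 x := by
    intro x hx
    have := hg2mono (Set.self_mem_Ici) (le_of_lt hx) hx
    rwa [hg20] at this
  -- induction on k: u k < u (k+1) and difference bound
  have key : ∀ k, 1 ≤ k → k ≤ n - 1 →
      u k < u (k + 1) ∧ u (k + 1) - u k ≤ h ^ 2 * ((k:ℝ) - 1/2) * g1 (u k) := by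
    intro k hk1
    induction k, hk1 using Nat.le_induction with
    | base =>
      intro _
      have hu1 : 0 < u 1 := hupos 1 le_rfl (by omega)
      have hg1u1 : 0 < g1 (u 1) := hg1pos _ hu1
      have h12 : u (1 + 1) = u 2 := by norm_num
      have hp : 0 < h ^ 2 / 2 * g1 (u 1) := by positivity
      constructor
      · rw [h12]; linarith
      · rw [h12]; push_cast; nlinarith [heq1]
    | succ k hk ih =>
      intro hkn
      have ihk := ih (by omega)
      have hmid := heqmid (k + 1) (by omega) hkn
      simp only [Nat.add_sub_cancel] at hmid
      have huk : 0 < u k := hupos k hk (by omega)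
      have huk1 : 0 < u (k + 1) := hupos (k+1) (by omega) (by omega)
      have hg1uk1 : 0 < g1 (u (k + 1)) := hg1pos _ huk1
      have hg1le : g1 (u k) ≤ g1 (u (k + 1)) :=
        le_of_lt (hg1mono (le_of_lt huk) (le_of_lt huk1) ihk.1)
      have hkR : (1:ℝ) ≤ (k:ℝ) := by exact_mod_cast hk
      have hc1 : (0:ℝ) ≤ h ^ 2 * ((k:ℝ) - 1/2) := by
        apply mul_nonneg (sq_nonneg h); linarith
      have hstep : h ^ 2 * ((k:ℝ) - 1/2) * g1 (u k) ≤
          h ^ 2 * ((k:ℝ) - 1/2) * g1 (u (k + 1)) :=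
        mul_le_mul_of_nonneg_left hg1le hc1
      have hp : 0 < h ^ 2 * g1 (u (k + 1)) := by positivity
      constructor
      · linarith [ihk.1, hmid, hp]
      · push_cast
        linarith [ihk.2, hmid, hstep]
  -- apply at k = n - 1
  have hn1n : n - 1 + 1 = n := by omega
  obtain ⟨ha, hb⟩ := key (n - 1) (by omega) le_rfl
  rw [hn1n] at ha hb
  have hcast : ((n - 1 : ℕ) : ℝ) = (n:ℝ) - 1 := by
    have : (1:ℕ) ≤ n := by omega
    push_cast [this]; ring
  rw [hcast] at hb
  have hunpos : 0 < u n := hupos n (by omega) le_rfl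
  have hun1pos : 0 < u (n - 1) := hupos (n - 1) (by omega) (by omega)
  have hg1lt : g1 (u (n - 1)) < g1 (u n) :=
    hg1mono (le_of_lt hun1pos) (le_of_lt hunpos) ha
  have hg1un : 0 < g1 (u n) := hg1pos _ hunpos
  have hg2un : 0 < g2 (u n) := hg2pos _ hunpos
  -- main inequality: h * α * g2 (u n) < h * g1 (u n)
  have hne : ((n:ℝ) - 1) ≠ 0 := by linarith
  have hmain : h * (α * g2 (u n)) < h * (g1 (u n)) := by
    have hcoef : (0:ℝ) < (n:ℝ) - 1 - 1/2 := by linarith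
    have h1 : u n - u (n - 1) ≤ h ^ 2 * ((n:ℝ) - 1 - 1/2) * g1 (u (n - 1)) := hb
    have h2 : h ^ 2 * ((n:ℝ) - 1 - 1/2) * g1 (u (n - 1)) <
        h ^ 2 * ((n:ℝ) - 1 - 1/2) * g1 (u n) :=
      mul_lt_mul_of_pos_left hg1lt (mul_pos (pow_pos hhpos 2) hcoef)
    have h3 : h * α * g2 (u n) = (u n - u (n - 1)) + h ^ 2 / 2 * g1 (u n) := by
      linarith [heqlast]
    have h4 : h ^ 2 * ((n:ℝ) - 1) = h := by
      rw [hh]; field_simp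
    have h5 : h ^ 2 * ((n:ℝ) - 1 - 1/2) * g1 (u n) + h ^ 2 / 2 * g1 (u n)
        = h * g1 (u n) := by linear_combination g1 (u n) * h4
    linarith
  have hαlt : α < gg g1 g2 (u n) := by
    rw [gg, lt_div_iff₀ hg2un]
    exact (mul_lt_mul_iff_right₀ hhpos).mp hmain
  -- conclude
  by_contra hc
  push_neg at hc
  obtain ⟨hgα, hggα⟩ := hginv α hα
  have : gg g1 g2 (u n) ≤ gg g1 g2 (ginv α) :=
    hgmono.monotoneOn (Set.mem_Ioi.mpr hunpos) hgα hc
  rw [hggα] at this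
  linarith
end
end

section
/- Let α > 0, let (u₁,…,u_n) ∈ (0,∞)ⁿ be a positive solution of the discrete system (Sα), and let C > 0 be any upper bound of u_n (i.e. u_n ≤ C). Then u_n < e^M · u₁, where M := g₁′(C). -/
noncomputable section

lemma aux_g1_pos (g1 : ℝ → ℝ) (hg1C : ContDiff ℝ 3 g1) (hg10 : g1 0 = 0)
    (hg1d : ∀ x > (0:ℝ), 0 < deriv g1 x) : ∀ x > (0:ℝ), 0 < g1 x := by
  intro x hx
  have hmono : StrictMonoOn g1 (Set.Ici 0) :=
    strictMonoOn_of_deriv_pos (convex_Ici 0) hg1C.continuous.continuousOn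
      (by rw [interior_Ici]; exact fun t ht => hg1d t ht)
  have := hmono (Set.self_mem_Ici) (Set.mem_Ici.mpr hx.le) hx
  linarith [hg10 ▸ this]

lemma aux_g1_le (g1 : ℝ → ℝ) (hg1C : ContDiff ℝ 3 g1) (hg10 : g1 0 = 0)
    (hg1dd : ∀ x > (0:ℝ), 0 < deriv (deriv g1) x) (C : ℝ) (hC : 0 < C) :
    ∀ x, 0 ≤ x → x ≤ C → g1 x ≤ deriv g1 C * x := by
  have hd1 : Differentiable ℝ g1 := hg1C.differentiable (by norm_num)
  have h3 : ContDiff ℝ ((2:ℕ)+1) g1 := by exact_mod_cast hg1C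
  have hderiv : ContDiff ℝ (2:ℕ) (deriv g1) := (contDiff_succ_iff_deriv.mp h3).2.2
  have hdm : StrictMonoOn (deriv g1) (Set.Ici 0) :=
    strictMonoOn_of_deriv_pos (convex_Ici 0) hderiv.continuous.continuousOn
      (by rw [interior_Ici]; exact fun t ht => hg1dd t ht)
  intro x hx0 hxC
  set M := deriv g1 C with hM
  set f : ℝ → ℝ := fun t => M * t - g1 t with hf
  have hdf : ∀ t, HasDerivAt f (M - deriv g1 t) t := by
    intro t
    have h1 : HasDerivAt (fun s : ℝ => M * s) M t := by
      simpa using (hasDerivAt_id t).const_mul M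
    exact h1.sub (hd1 t).hasDerivAt
  have hmonof : MonotoneOn f (Set.Icc 0 C) := by
    apply monotoneOn_of_deriv_nonneg (convex_Icc 0 C)
    · exact (Continuous.sub (continuous_const.mul continuous_id) hd1.continuous).continuousOn
    · intro t _; exact ((hdf t).differentiableAt).differentiableWithinAt
    · intro t ht
      rw [interior_Icc] at ht
      rw [(hdf t).deriv]
      have : deriv g1 t ≤ M := (hdm.monotoneOn) (Set.mem_Ici.mpr ht.1.le)
        (Set.mem_Ici.mpr hC.le) ht.2.le
      linarith
  have h0 : f 0 ≤ f x := hmonof (Set.mem_Icc.mpr ⟨le_rfl, hC.le⟩)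
    (Set.mem_Icc.mpr ⟨hx0, hxC⟩) hx0
  simp only [hf, hg10, mul_zero, sub_zero] at h0
  linarith

set_option maxHeartbeats 1000000 in
theorem stmt_7 (n : ℕ) (hn : 2 ≤ n) (h : ℝ) (hh : h = 1 / ((n : ℝ) - 1))
    (g1 g2 : ℝ → ℝ)
    (hg1C : ContDiff ℝ 3 g1) (hg2C : ContDiff ℝ 3 g2)
    (hg10 : g1 0 = 0) (hg20 : g2 0 = 0)
    (hg1d : ∀ x > (0:ℝ), 0 < deriv g1 x) (hg2d : ∀ x > (0:ℝ), 0 < deriv g2 x)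
    (hg1dd : ∀ x > (0:ℝ), 0 < deriv (deriv g1) x)
    (hg2dd : ∀ x > (0:ℝ), 0 < deriv (deriv g2) x)
    (hg1ddd : ∀ x > (0:ℝ), 0 ≤ deriv (deriv (deriv g1)) x)
    (hg2ddd : ∀ x > (0:ℝ), 0 ≤ deriv (deriv (deriv g2)) x)
    (α : ℝ) (hα : 0 < α) (u : ℕ → ℝ) (hu : IsSolution g1 g2 n h α u)
    (C : ℝ) (hC : 0 < C) (hunC : u n ≤ C) :
    u n < Real.exp (deriv g1 C) * u 1 := by
  obtain ⟨hpos, h12, hmid, _⟩ := hu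
  have hg1pos := aux_g1_pos g1 hg1C hg10 hg1d
  have hg1le := aux_g1_le g1 hg1C hg10 hg1dd C hC
  set M := deriv g1 C with hMdef
  have hM : 0 < M := hg1d C hC
  have hnR : (2:ℝ) ≤ (n:ℝ) := by exact_mod_cast hn
  have hhpos : 0 < h := by rw [hh]; exact div_pos one_pos (by linarith)
  have hh2 : 0 < h ^ 2 := by positivity
  -- Step 1: increments are positive
  have hD : ∀ m, 1 ≤ m → m ≤ n - 1 → 0 < u (m + 1) - u m := by
    intro m hm
    induction m, hm using Nat.le_induction with
    | base =>
      intro _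
      have hu1 : 0 < u 1 := hpos 1 le_rfl (by omega)
      have := hg1pos (u 1) hu1
      rw [(by norm_num : (1:ℕ)+1 = 2), h12]
      positivity
    | succ k hk ih =>
      intro hk1
      have ihh := ih (by omega)
      have hrec := hmid (k + 1) (by omega) hk1
      simp only [Nat.add_sub_cancel] at hrec
      have huk1 : 0 < u (k + 1) := hpos (k + 1) (by omega) (by omega)
      have := hg1pos (u (k + 1)) huk1
      nlinarith
  -- Step 2: monotonicity
  have hmono : ∀ a b, 1 ≤ a → a ≤ b → b ≤ n → u a ≤ u b := by
    intro a b ha hab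
    induction b, hab using Nat.le_induction with
    | base => intro _; exact le_rfl
    | succ k hk ih =>
      intro hkn
      have h1 := hD k (by omega) (by omega)
      have h2 := ih (by omega)
      linarith
  have huC : ∀ k, 1 ≤ k → k ≤ n → u k ≤ C := fun k h1 h2 =>
    (hmono k n h1 h2 le_rfl).trans hunC
  -- Step 3: quantitative bounds
  have key : ∀ m, 1 ≤ m → m ≤ n - 1 →
      u (m + 1) - u m ≤ h ^ 2 * m * M * u m ∧
      u (m + 1) < u 1 * Real.exp (h ^ 2 * M * (m * (m + 1) / 2)) := by
    intro m hm
    induction m, hm using Nat.le_induction with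
    | base =>
      intro _
      have hu1 : 0 < u 1 := hpos 1 le_rfl (by omega)
      have hb : g1 (u 1) ≤ M * u 1 := hg1le (u 1) hu1.le (huC 1 le_rfl (by omega))
      have hfst : u (1 + 1) - u 1 ≤ h ^ 2 * (1:ℕ) * M * u 1 := by
        rw [(by norm_num : (1:ℕ)+1 = 2), h12]
        push_cast
        nlinarith [mul_pos hM hu1]
      refine ⟨hfst, ?_⟩
      have hlt : h ^ 2 * M + 1 < Real.exp (h ^ 2 * M) :=
        Real.add_one_lt_exp (by positivity)
      have hexp : Real.exp (h ^ 2 * M * ((1:ℕ) * ((1:ℕ) + 1) / 2)) =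
          Real.exp (h ^ 2 * M) := by push_cast; ring_nf
      rw [hexp]
      push_cast at hfst
      nlinarith
    | succ k hk ih =>
      intro hk1
      obtain ⟨ih1, ih2⟩ := ih (by omega)
      have hDk := hD k (by omega) (by omega)
      have hrec := hmid (k + 1) (by omega) hk1
      simp only [Nat.add_sub_cancel] at hrec
      have huk1 : 0 < u (k + 1) := hpos (k + 1) (by omega) (by omega)
      have hb : g1 (u (k + 1)) ≤ M * u (k + 1) :=
        hg1le (u (k + 1)) huk1.le (huC (k + 1) (by omega) (by omega))
      have hknn : (0:ℝ) ≤ h ^ 2 * (k:ℝ) * M := by positivity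
      have hmul : h ^ 2 * (k:ℝ) * M * u k ≤ h ^ 2 * (k:ℝ) * M * u (k + 1) :=
        mul_le_mul_of_nonneg_left (by linarith) hknn
      have hfst : u (k + 1 + 1) - u (k + 1) ≤ h ^ 2 * ((k:ℝ) + 1) * M * u (k + 1) := by
        nlinarith
      have hfst' : u (k + 1 + 1) - u (k + 1) ≤ h ^ 2 * ((k+1:ℕ):ℝ) * M * u (k + 1) := by
        push_cast; linarith
      refine ⟨hfst', ?_⟩
      have hX : 0 < h ^ 2 * ((k:ℝ) + 1) * M := by positivity
      have hlt : h ^ 2 * ((k:ℝ) + 1) * M + 1 < Real.exp (h ^ 2 * ((k:ℝ) + 1) * M) :=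
        Real.add_one_lt_exp hX.ne'
      calc u (k + 1 + 1) = u (k + 1) + (u (k + 1 + 1) - u (k + 1)) := by ring
        _ ≤ u (k + 1) * (1 + h ^ 2 * ((k:ℝ) + 1) * M) := by nlinarith
        _ < u (k + 1) * Real.exp (h ^ 2 * ((k:ℝ) + 1) * M) := by
            exact mul_lt_mul_of_pos_left (by linarith) huk1
        _ < (u 1 * Real.exp (h ^ 2 * M * ((k:ℝ) * ((k:ℝ) + 1) / 2))) *
              Real.exp (h ^ 2 * ((k:ℝ) + 1) * M) := by
            exact mul_lt_mul_of_pos_right ih2 (Real.exp_pos _)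
        _ = u 1 * Real.exp (h ^ 2 * M * (((k+1:ℕ):ℝ) * (((k+1:ℕ):ℝ) + 1) / 2)) := by
            rw [mul_assoc, ← Real.exp_add]
            congr 1
            push_cast
            ring
  -- Conclusion
  have hfin := (key (n - 1) (by omega) le_rfl).2
  have hidx : n - 1 + 1 = n := by omega
  rw [hidx] at hfin
  have hcast : ((n - 1 : ℕ) : ℝ) = (n:ℝ) - 1 := by
    have h1 : 1 ≤ n := by omega
    push_cast [h1]
    ring
  rw [hcast] at hfin
  have hu1 : 0 < u 1 := hpos 1 le_rfl (by omega)
  have hN1 : (0:ℝ) < (n:ℝ) - 1 := by linarith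
  have hE : h ^ 2 * M * (((n:ℝ) - 1) * (((n:ℝ) - 1) + 1) / 2) = M * (n:ℝ) / (2 * ((n:ℝ) - 1)) := by
    rw [hh]
    field_simp
    ring
  rw [hE] at hfin
  have hEle : M * (n:ℝ) / (2 * ((n:ℝ) - 1)) ≤ M := by
    rw [div_le_iff₀ (by linarith)]
    nlinarith
  have := Real.exp_le_exp.mpr hEle
  calc u n < u 1 * Real.exp (M * (n:ℝ) / (2 * ((n:ℝ) - 1))) := hfin
    _ ≤ u 1 * Real.exp M := by nlinarith [Real.exp_pos (M * (n:ℝ) / (2 * ((n:ℝ) - 1)))]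
    _ = Real.exp M * u 1 := by ring
end
end

section
/- Let α > 0, let (u₁,…,u_n) ∈ (0,∞)ⁿ be a positive solution of the discrete system (Sα), and let C > 0 be any upper bound of u_n (i.e. u_n ≤ C). If the function g := g₁/g₂ is a strictly increasing bijection of (0,∞) onto (0,∞), then u₁ > g⁻¹(α)/e^M, where M := g₁′(C). -/
noncomputable section

private lemma smono_aux (g : ℝ → ℝ) (hc : Continuous g)
    (hd : ∀ x > (0:ℝ), 0 < deriv g x) : StrictMonoOn g (Set.Ici 0) := by
  apply strictMonoOn_of_deriv_pos (convex_Ici 0) hc.continuousOn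
  intro x hx
  rw [interior_Ici] at hx
  exact hd x hx

set_option maxHeartbeats 1600000 in
theorem stmt_8 (n : ℕ) (hn : 2 ≤ n) (h : ℝ) (hh : h = 1 / ((n : ℝ) - 1))
    (g1 g2 : ℝ → ℝ)
    (hg1C : ContDiff ℝ 3 g1) (hg2C : ContDiff ℝ 3 g2)
    (hg10 : g1 0 = 0) (hg20 : g2 0 = 0)
    (hg1d : ∀ x > (0:ℝ), 0 < deriv g1 x) (hg2d : ∀ x > (0:ℝ), 0 < deriv g2 x)
    (hg1dd : ∀ x > (0:ℝ), 0 < deriv (deriv g1) x)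
    (hg2dd : ∀ x > (0:ℝ), 0 < deriv (deriv g2) x)
    (hg1ddd : ∀ x > (0:ℝ), 0 ≤ deriv (deriv (deriv g1)) x)
    (hg2ddd : ∀ x > (0:ℝ), 0 ≤ deriv (deriv (deriv g2)) x)
    (α : ℝ) (hα : 0 < α) (u : ℕ → ℝ) (hu : IsSolution g1 g2 n h α u)
    (C : ℝ) (hC : 0 < C) (hunC : u n ≤ C)
    (hgmono : StrictMonoOn (gg g1 g2) (Set.Ioi 0))
    (hgbij : Set.BijOn (gg g1 g2) (Set.Ioi 0) (Set.Ioi 0))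
    (ginv : ℝ → ℝ)
    (hginv : ∀ y ∈ Set.Ioi (0:ℝ), ginv y ∈ Set.Ioi 0 ∧ gg g1 g2 (ginv y) = y) :
    ginv α / Real.exp (deriv g1 C) < u 1 := by

  obtain ⟨hpos, heq1, heqk, heqn⟩ := hu
  set M := deriv g1 C with hMdef
  clear_value M
  have hg1cont : Continuous g1 := hg1C.continuous
  have hg1diff : Differentiable ℝ g1 := hg1C.differentiable (by norm_num)
  have hdg1cont : Continuous (deriv g1) := hg1C.continuous_deriv (by norm_num)
  have hg1C' : ContDiff ℝ 2 (deriv g1) := by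
    have : ContDiff ℝ ((2:ℕ) + 1) g1 := by exact_mod_cast hg1C
    exact_mod_cast (contDiff_succ_iff_deriv.mp this).2.2
  have hdg1diff : Differentiable ℝ (deriv g1) := hg1C'.differentiable (by norm_num)
  have hg2cont : Continuous g2 := hg2C.continuous
  have hg1mono : StrictMonoOn g1 (Set.Ici 0) := smono_aux g1 hg1cont hg1d
  have hg2mono : StrictMonoOn g2 (Set.Ici 0) := smono_aux g2 hg2cont hg2d
  have hg1pos : ∀ x, 0 < x → 0 < g1 x := by
    intro x hx
    have := hg1mono Set.self_mem_Ici (Set.mem_Ici.mpr hx.le) hx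
    rwa [hg10] at this
  have hg2pos : ∀ x, 0 < x → 0 < g2 x := by
    intro x hx
    have := hg2mono Set.self_mem_Ici (Set.mem_Ici.mpr hx.le) hx
    rwa [hg20] at this
  have hn1 : (1:ℝ) ≤ (n:ℝ) - 1 := by
    have : (2:ℝ) ≤ (n:ℝ) := by exact_mod_cast hn
    linarith
  have hhpos : 0 < h := by
    rw [hh]; apply div_pos one_pos; linarith
  have hhn : h * ((n:ℝ) - 1) = 1 := by
    rw [hh]; field_simp
  have hMpos : 0 < M := by rw [hMdef]; exact hg1d C hC
  have hdg1mono : MonotoneOn (deriv g1) (Set.Ici 0) := by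
    apply monotoneOn_of_deriv_nonneg (convex_Ici 0) hdg1cont.continuousOn
      (hdg1diff.differentiableOn)
    intro x hx
    rw [interior_Ici] at hx
    exact (hg1dd x hx).le
  have hkey : ∀ x, 0 ≤ x → x ≤ C → g1 x ≤ M * x := by
    intro x hx0 hxC
    have hmono : MonotoneOn (fun y => M * y - g1 y) (Set.Icc 0 C) := by
      apply monotoneOn_of_deriv_nonneg (convex_Icc 0 C)
      · exact Continuous.continuousOn (by continuity)
      · exact ((differentiable_id.const_mul M).sub hg1diff).differentiableOn
      · intro y hy
        rw [interior_Icc] at hy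
        have hD : deriv (fun z : ℝ => M * z - g1 z) y = M - deriv g1 y := by
          have h1 : HasDerivAt (fun z : ℝ => M * z - g1 z) (M * 1 - deriv g1 y) y :=
            ((hasDerivAt_id y).const_mul M).sub (hg1diff y).hasDerivAt
          simpa using h1.deriv
        rw [hD]
        have : deriv g1 y ≤ M := by
          rw [hMdef]
          exact hdg1mono (Set.mem_Ici.mpr hy.1.le) (Set.mem_Ici.mpr hC.le) hy.2.le
        linarith
    have h0 : (fun y => M * y - g1 y) 0 ≤ (fun y => M * y - g1 y) x :=
      hmono ⟨le_refl 0, hC.le⟩ ⟨hx0, hxC⟩ hx0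
    simp only [mul_zero, hg10, sub_zero] at h0
    linarith
  -- positivity of increments
  have hdpos : ∀ k, 1 ≤ k → k ≤ n - 1 → 0 < u (k+1) - u k := by
    intro k hk1
    induction k, hk1 using Nat.le_induction with
    | base =>
      intro _
      have hgu := hg1pos (u 1) (hpos 1 le_rfl (by omega))
      have : (0:ℝ) < h ^ 2 / 2 * g1 (u 1) := by positivity
      have e : (1:ℕ) + 1 = 2 := by norm_num
      rw [e]
      linarith [heq1]
    | succ k hk ih =>
      intro hkn
      have heq := heqk (k+1) (by omega) hkn
      rw [show k + 1 - 1 = k from by omega] at heq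
      have hprev := ih (by omega)
      have hup := hpos (k+1) (by omega) (by omega)
      have hgu : 0 < h ^ 2 * g1 (u (k+1)) := by
        have := hg1pos (u (k+1)) hup
        positivity
      linarith
  -- monotonicity along indices
  have haux : ∀ m k, 1 ≤ k → k + m ≤ n → u k ≤ u (k + m) := by
    intro m
    induction m with
    | zero => intro k _ _; simp
    | succ m ih =>
      intro k hk1 hkm
      have h1 : u k ≤ u (k+1) := by linarith [hdpos k hk1 (by omega)]
      have h2 : u (k+1) ≤ u (k+1+m) := ih (k+1) (by omega) (by omega)
      have e : k + 1 + m = k + (m+1) := by omega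
      rw [e] at h2
      linarith
  have huleC : ∀ k, 1 ≤ k → k ≤ n → u k ≤ C := by
    intro k h1 h2
    have := haux (n - k) k h1 (by omega)
    rw [show k + (n - k) = n from by omega] at this
    linarith
  -- nonstrict growth bound on increments
  have hd2 : ∀ k, 1 ≤ k → k ≤ n - 1 → u (k+1) - u k ≤ h ^ 2 * M * (k:ℝ) * u k := by
    intro k hk1
    induction k, hk1 using Nat.le_induction with
    | base =>
      intro _
      have hu1 := hpos 1 le_rfl (by omega)
      have hk := hkey (u 1) hu1.le (huleC 1 le_rfl (by omega))
      have hh2 : (0:ℝ) < h ^ 2 := by positivity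
      have e : (1:ℕ) + 1 = 2 := by norm_num
      rw [e]
      push_cast
      nlinarith [heq1, mul_le_mul_of_nonneg_left hk hh2.le, mul_pos (mul_pos hh2 hMpos) hu1]
    | succ k hk ih =>
      intro hkn
      have heq := heqk (k+1) (by omega) hkn
      rw [show k + 1 - 1 = k from by omega] at heq
      have hprev := ih (by omega)
      have hup1 := hpos (k+1) (by omega) (by omega)
      have hkb := hkey (u (k+1)) hup1.le (huleC (k+1) (by omega) (by omega))
      have hmonok : u k ≤ u (k+1) := by linarith [hdpos k (by omega) (by omega)]
      have hh2 : (0:ℝ) ≤ h ^ 2 := by positivity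
      have hco : (0:ℝ) ≤ h ^ 2 * M * (k:ℝ) := by positivity
      have t1 := mul_le_mul_of_nonneg_left hmonok hco
      have t2 := mul_le_mul_of_nonneg_left hkb hh2
      push_cast
      nlinarith
  -- strict trapezoidal bound on increments
  have hg1mono' : MonotoneOn g1 (Set.Ici 0) := hg1mono.monotoneOn
  have hdb : ∀ k, 1 ≤ k → k ≤ n - 1 →
      u (k+1) - u k < h ^ 2 * ((k:ℝ) - 1/2) * g1 (u (k+1)) := by
    intro k hk1
    induction k, hk1 using Nat.le_induction with
    | base =>
      intro _
      have hu1 := hpos 1 le_rfl (by omega)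
      have hu2 := hpos 2 (by omega) (by omega)
      have hd1 : 0 < u 2 - u 1 := by
        have := hdpos 1 le_rfl (by omega)
        simpa using this
      have hlt : g1 (u 1) < g1 (u 2) :=
        hg1mono (Set.mem_Ici.mpr hu1.le) (Set.mem_Ici.mpr hu2.le) (by linarith)
      have hh2 : (0:ℝ) < h ^ 2 := by positivity
      have e : (1:ℕ) + 1 = 2 := by norm_num
      rw [e]
      push_cast
      nlinarith [heq1, mul_pos hh2 (sub_pos.mpr hlt)]
    | succ k hk ih =>
      intro hkn
      have heq := heqk (k+1) (by omega) hkn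
      rw [show k + 1 - 1 = k from by omega] at heq
      have hprev := ih (by omega)
      have hup1 := hpos (k+1) (by omega) (by omega)
      have hup2 := hpos (k+1+1) (by omega) (by omega)
      have hm : u (k+1) ≤ u (k+1+1) := by linarith [hdpos (k+1) (by omega) hkn]
      have hgm : g1 (u (k+1)) ≤ g1 (u (k+1+1)) :=
        hg1mono' (Set.mem_Ici.mpr hup1.le) (Set.mem_Ici.mpr hup2.le) hm
      have hh2 : (0:ℝ) < h ^ 2 := by positivity
      have hkR : (1:ℝ) ≤ (k:ℝ) := by exact_mod_cast hk
      have hco : (0:ℝ) ≤ h ^ 2 * ((k:ℝ) - 1/2) := by nlinarith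
      have hstep := mul_le_mul_of_nonneg_left hgm hco
      have hstep2 := mul_le_mul_of_nonneg_left hgm hh2.le
      push_cast
      nlinarith
  -- step growth and exponential bound
  have hstepb : ∀ k, 1 ≤ k → k ≤ n - 1 → u (k+1) ≤ (1 + h * M) * u k := by
    intro k h1 h2
    have hd := hd2 k h1 h2
    have hkn : (k:ℝ) ≤ (n:ℝ) - 1 := by
      have h3 : ((k:ℕ):ℝ) ≤ ((n-1:ℕ):ℝ) := Nat.cast_le.mpr h2
      rwa [Nat.cast_sub (by omega), Nat.cast_one] at h3
    have hkpos := hpos k h1 (by omega)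
    have hc1 : h ^ 2 * M * (k:ℝ) ≤ h * M := by
      have hhk : h * (k:ℝ) ≤ 1 := by
        calc h * (k:ℝ) ≤ h * ((n:ℝ) - 1) := by nlinarith
          _ = 1 := hhn
      nlinarith [mul_le_mul_of_nonneg_left hhk (mul_pos hhpos hMpos).le]
    nlinarith [mul_le_mul_of_nonneg_right hc1 hkpos.le]
  have hgrow : ∀ k, 1 ≤ k → k ≤ n → u k ≤ u 1 * (1 + h * M) ^ (k - 1) := by
    intro k hk1
    induction k, hk1 using Nat.le_induction with
    | base => intro _; simp
    | succ k hk ih =>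
      intro hkn
      have h1 : u (k+1) ≤ (1 + h * M) * u k := hstepb k hk (by omega)
      have h2 := ih (by omega)
      have hco : (0:ℝ) ≤ 1 + h * M := by nlinarith
      calc u (k+1) ≤ (1 + h * M) * u k := h1
        _ ≤ (1 + h * M) * (u 1 * (1 + h * M) ^ (k - 1)) :=
            mul_le_mul_of_nonneg_left h2 hco
        _ = u 1 * (1 + h * M) ^ (k - 1 + 1) := by ring
        _ = u 1 * (1 + h * M) ^ (k + 1 - 1) := by
            rw [show k - 1 + 1 = k + 1 - 1 from by omega]
  have hfinal1 : u n ≤ u 1 * Real.exp M := by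
    have h1 := hgrow n (by omega) le_rfl
    have h2 : (1 + h * M) ^ (n - 1) ≤ Real.exp M := by
      have ha : 1 + h * M ≤ Real.exp (h * M) := by
        have := Real.add_one_le_exp (h * M); linarith
      have hnn : (0:ℝ) ≤ 1 + h * M := by nlinarith
      have hb : (1 + h * M) ^ (n-1) ≤ (Real.exp (h * M)) ^ (n-1) :=
        pow_le_pow_left₀ hnn ha _
      have hc : (Real.exp (h * M)) ^ (n-1) = Real.exp (((n-1:ℕ):ℝ) * (h * M)) := by
        rw [← Real.exp_nat_mul]
      rw [hc] at hb
      have hd : ((n-1:ℕ):ℝ) * (h * M) = M := by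
        rw [Nat.cast_sub (by omega), Nat.cast_one]
        calc ((n:ℝ) - 1) * (h * M) = (h * ((n:ℝ) - 1)) * M := by ring
          _ = M := by rw [hhn]; ring
      rwa [hd] at hb
    have hu1 := hpos 1 le_rfl (by omega)
    calc u n ≤ u 1 * (1 + h * M) ^ (n - 1) := h1
      _ ≤ u 1 * Real.exp M := mul_le_mul_of_nonneg_left h2 hu1.le
  -- alpha < g(u n)
  have hunpos := hpos n (by omega) le_rfl
  have hg2un := hg2pos (u n) hunpos
  have hg1un := hg1pos (u n) hunpos
  have hdn := hdb (n-1) (by omega) le_rfl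
  rw [show n - 1 + 1 = n from by omega] at hdn
  have hcast : ((n-1:ℕ):ℝ) = (n:ℝ) - 1 := by
    rw [Nat.cast_sub (by omega), Nat.cast_one]
  rw [hcast] at hdn
  have hαlt : α < gg g1 g2 (u n) := by
    rw [gg, lt_div_iff₀ hg2un]
    have key2 : h ^ 2 * ((n:ℝ) - 1) * g1 (u n) = h * g1 (u n) := by
      have : h ^ 2 * ((n:ℝ) - 1) = h := by
        calc h ^ 2 * ((n:ℝ) - 1) = h * (h * ((n:ℝ) - 1)) := by ring
          _ = h := by rw [hhn]; ring
      rw [this]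
    have h2 : h * (α * g2 (u n)) < h * g1 (u n) := by nlinarith [heqn, hdn, key2]
    exact lt_of_mul_lt_mul_left h2 hhpos.le
  obtain ⟨hgi_mem, hgi_eq⟩ := hginv α hα
  have hlt : ginv α < u n := by
    rcases lt_trichotomy (ginv α) (u n) with hl | he | hg
    · exact hl
    · exfalso; rw [← he, hgi_eq] at hαlt; exact lt_irrefl _ hαlt
    · exfalso
      have := hgmono (Set.mem_Ioi.mpr hunpos) hgi_mem hg
      rw [hgi_eq] at this; linarith
  rw [div_lt_iff₀ (Real.exp_pos M)]
  calc ginv α < u n := hlt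
    _ ≤ u 1 * Real.exp M := hfinal1
end
end

section
/- Let α > 0 and let (u₁,…,u_n) ∈ (0,∞)ⁿ be a positive solution of the discrete system (Sα). Then G(u_n) < G(u₁) + α²/2, where G := G₁/g₂². Moreover, if G is a strictly increasing bijection of (0,∞) onto (0,∞), then u_n < G⁻¹(G(u₁) + α²/2). -/
noncomputable section

/-- Strict monotonicity on `[0,∞)` from positive derivative on `(0,∞)`. -/
lemma my_strictMonoOn {g : ℝ → ℝ} (hC : Continuous g)
    (hd : ∀ x > (0:ℝ), 0 < deriv g x) : StrictMonoOn g (Set.Ici 0) :=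
  strictMonoOn_of_deriv_pos (convex_Ici 0) hC.continuousOn
    (by rw [interior_Ici]; exact fun x hx => hd x hx)

lemma my_pos {g : ℝ → ℝ} (hC : Continuous g) (hg0 : g 0 = 0)
    (hd : ∀ x > (0:ℝ), 0 < deriv g x) : ∀ x > (0:ℝ), 0 < g x := by
  intro x hx
  have := my_strictMonoOn hC hd (Set.self_mem_Ici) (Set.mem_Ici.2 hx.le) hx
  rwa [hg0] at this

lemma my_convex {g : ℝ → ℝ} (hC : ContDiff ℝ 3 g)
    (hdd : ∀ x > (0:ℝ), 0 < deriv (deriv g) x) : ConvexOn ℝ (Set.Ici 0) g := by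
  have h3 : ContDiff ℝ ((2:ℕ) + 1) g := by exact_mod_cast hC
  have h2 : ContDiff ℝ 2 (deriv g) := (contDiff_succ_iff_deriv.mp h3).2.2
  apply convexOn_of_deriv2_nonneg (convex_Ici 0) hC.continuous.continuousOn
  · exact (hC.differentiable (by norm_num)).differentiableOn
  · exact (h2.differentiable (by norm_num)).differentiableOn
  · intro x hx
    rw [interior_Ici] at hx
    simp only [Function.iterate_succ, Function.iterate_zero, Function.comp_apply, id_eq,
      Function.comp]
    exact (hdd x hx).le

/-- Trapezoid rule overestimates the integral of a convex function. -/
lemma my_trapezoid {f : ℝ → ℝ} {a b : ℝ} (hab : a ≤ b) (hf : Continuous f)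
    (hconv : ConvexOn ℝ (Set.Icc a b) f) :
    (∫ x in a..b, f x) ≤ (f a + f b) / 2 * (b - a) := by
  rcases eq_or_lt_of_le hab with rfl | hab
  · simp
  have hba : 0 < b - a := sub_pos.2 hab
  have hpt : ∀ x ∈ Set.Icc a b, f x ≤ f a + (f b - f a) / (b - a) * (x - a) := by
    intro x hx
    have h1 : 0 ≤ (b - x) / (b - a) := div_nonneg (sub_nonneg.2 hx.2) hba.le
    have h2 : 0 ≤ (x - a) / (b - a) := div_nonneg (sub_nonneg.2 hx.1) hba.le
    have h3 : (b - x) / (b - a) + (x - a) / (b - a) = 1 := by field_simp; ring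
    have h4 := hconv.2 (Set.left_mem_Icc.2 hab.le) (Set.right_mem_Icc.2 hab.le) h1 h2 h3
    have hxeq : ((b - x) / (b - a)) • a + ((x - a) / (b - a)) • b = x := by
      simp only [smul_eq_mul]; field_simp; ring
    rw [hxeq] at h4
    refine h4.trans (le_of_eq ?_)
    simp only [smul_eq_mul]; field_simp; ring
  have hint : (∫ x in a..b, f x) ≤ ∫ x in a..b, (f a + (f b - f a) / (b - a) * (x - a)) := by
    apply intervalIntegral.integral_mono_on hab.le (hf.intervalIntegrable _ _)
      (Continuous.intervalIntegrable (by continuity) _ _) hpt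
  refine hint.trans (le_of_eq ?_)
  rw [intervalIntegral.integral_add (intervalIntegrable_const)
      (Continuous.intervalIntegrable (by continuity) _ _)]
  rw [intervalIntegral.integral_const_mul]
  rw [intervalIntegral.integral_sub (Continuous.intervalIntegrable (by continuity) _ _)
      (intervalIntegrable_const)]
  rw [integral_id, intervalIntegral.integral_const, intervalIntegral.integral_const]
  simp only [smul_eq_mul]
  field_simp
  ring
set_option maxHeartbeats 1600000 in
theorem stmt_9 (n : ℕ) (hn : 2 ≤ n) (h : ℝ) (hh : h = 1 / ((n : ℝ) - 1))
    (g1 g2 : ℝ → ℝ)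
    (hg1C : ContDiff ℝ 3 g1) (hg2C : ContDiff ℝ 3 g2)
    (hg10 : g1 0 = 0) (hg20 : g2 0 = 0)
    (hg1d : ∀ x > (0:ℝ), 0 < deriv g1 x) (hg2d : ∀ x > (0:ℝ), 0 < deriv g2 x)
    (hg1dd : ∀ x > (0:ℝ), 0 < deriv (deriv g1) x)
    (hg2dd : ∀ x > (0:ℝ), 0 < deriv (deriv g2) x)
    (hg1ddd : ∀ x > (0:ℝ), 0 ≤ deriv (deriv (deriv g1)) x)
    (hg2ddd : ∀ x > (0:ℝ), 0 ≤ deriv (deriv (deriv g2)) x)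
    (α : ℝ) (hα : 0 < α) (u : ℕ → ℝ) (hu : IsSolution g1 g2 n h α u) :
    GG g1 g2 (u n) < GG g1 g2 (u 1) + α ^ 2 / 2 ∧
    (∀ Ginv : ℝ → ℝ,
      StrictMonoOn (GG g1 g2) (Set.Ioi 0) →
      Set.BijOn (GG g1 g2) (Set.Ioi 0) (Set.Ioi 0) →
      (∀ y ∈ Set.Ioi (0:ℝ), Ginv y ∈ Set.Ioi 0 ∧ GG g1 g2 (Ginv y) = y) →
      u n < Ginv (GG g1 g2 (u 1) + α ^ 2 / 2)) := by
  obtain ⟨hupos, heq1, heqk, heqn⟩ := hu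
  set m := n - 1 with hm
  have hm1 : 1 ≤ m := by omega
  have hmn : m + 1 = n := by omega
  have hh0 : 0 < h := by
    rw [hh]
    have h2 : (2:ℝ) ≤ (n:ℝ) := by exact_mod_cast hn
    apply div_pos one_pos; linarith
  have hg1cont : Continuous g1 := hg1C.continuous
  have hg2cont : Continuous g2 := hg2C.continuous
  have hg1mono : StrictMonoOn g1 (Set.Ici 0) := my_strictMonoOn hg1cont hg1d
  have hg2mono : StrictMonoOn g2 (Set.Ici 0) := my_strictMonoOn hg2cont hg2d
  have hg1pos : ∀ x > (0:ℝ), 0 < g1 x := my_pos hg1cont hg10 hg1d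
  have hg2pos : ∀ x > (0:ℝ), 0 < g2 x := my_pos hg2cont hg20 hg2d
  have hu1 : 0 < u 1 := hupos 1 le_rfl (by omega)
  set d : ℕ → ℝ := fun k => u (k + 1) - u k with hd_def
  have hd1 : d 1 = h ^ 2 / 2 * g1 (u 1) := by
    simp only [hd_def]; norm_num; linarith [heq1]
  have hdrec : ∀ k, 2 ≤ k → k ≤ m → d k = d (k - 1) + h ^ 2 * g1 (u k) := by
    intro k hk2 hkm
    have h1 : k - 1 + 1 = k := by omega
    have h2 := heqk k hk2 hkm
    simp only [hd_def, h1]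
    linarith
  have hdpos : ∀ k, 1 ≤ k → k ≤ m → 0 < d k := by
    intro k hk1
    induction k, hk1 using Nat.le_induction with
    | base =>
      intro _
      rw [hd1]
      have := hg1pos _ hu1
      positivity
    | succ j hj ih =>
      intro hjm
      rw [hdrec (j + 1) (by omega) hjm]
      have h2 := hg1pos _ (hupos (j + 1) (by omega) (by omega))
      have h3 := ih (by omega)
      simp only [Nat.add_sub_cancel]
      have : 0 < h ^ 2 * g1 (u (j + 1)) := by positivity
      linarith
  have h12 : u 1 < u 2 := by
    have := hdpos 1 le_rfl hm1
    simp only [hd_def] at this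
    norm_num at this
    linarith
  have h2n : u 2 ≤ u n := by
    have key : ∀ l, 2 ≤ l → l ≤ n → u 2 ≤ u l := by
      intro l hl
      induction l, hl using Nat.le_induction with
      | base => intro _; exact le_rfl
      | succ j hj ih =>
        intro hjn
        have h4 := hdpos j (by omega) (by omega)
        simp only [hd_def] at h4
        have := ih (by omega)
        linarith
    exact key n hn le_rfl
  have h1n : u 1 < u n := lt_of_lt_of_le h12 h2n
  have hun : 0 < u n := lt_trans hu1 h1n
  -- key discrete energy identity
  have hQ : ∀ j, 1 ≤ j → j ≤ m →
      d j ^ 2 + h ^ 2 * g1 (u (j + 1)) * d j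
        = d 1 ^ 2 - h ^ 2 * g1 (u 1) * d 1
          + 2 * h ^ 2 * ∑ k ∈ Finset.Icc 1 j, (g1 (u k) + g1 (u (k + 1))) / 2 * d k := by
    intro j hj
    induction j, hj using Nat.le_induction with
    | base =>
      intro _
      rw [Finset.Icc_self, Finset.sum_singleton]
      ring
    | succ j hj ih =>
      intro hjm
      rw [Finset.sum_Icc_succ_top (by omega)]
      have hrec := hdrec (j + 1) (by omega) hjm
      simp only [Nat.add_sub_cancel] at hrec
      have ihj := ih (by omega)
      rw [hrec]
      linear_combination ihj
  have hQm := hQ m hm1 le_rfl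
  rw [hmn] at hQm
  set T := ∑ k ∈ Finset.Icc 1 m, (g1 (u k) + g1 (u (k + 1))) / 2 * d k with hT_def
  have hdm : d m = -(h ^ 2 / 2) * g1 (u n) + h * α * g2 (u n) := by
    simp only [hd_def, hmn]
    exact heqn
  rw [hd1, hdm] at hQm
  have hident : α ^ 2 * g2 (u n) ^ 2
      = 2 * T + h ^ 2 / 4 * (g1 (u n) ^ 2 - g1 (u 1) ^ 2) := by
    have h2 : (h ^ 2 : ℝ) ≠ 0 := pow_ne_zero _ (ne_of_gt hh0)
    apply mul_left_cancel₀ h2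
    linear_combination hQm
  -- trapezoid lower bound on T
  have hconv1 : ConvexOn ℝ (Set.Ici 0) g1 := my_convex hg1C hg1dd
  have htrap : ∀ k ∈ Finset.Icc 1 m,
      primG1 g1 (u (k + 1)) - primG1 g1 (u k) ≤ (g1 (u k) + g1 (u (k + 1))) / 2 * d k := by
    intro k hk
    rw [Finset.mem_Icc] at hk
    have hk0 : 0 < u k := hupos k hk.1 (by omega)
    have hle : u k ≤ u (k + 1) := by
      have := hdpos k hk.1 hk.2
      simp only [hd_def] at this
      linarith
    have hsub : Set.Icc (u k) (u (k + 1)) ⊆ Set.Ici 0 := fun x hx => hk0.le.trans hx.1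
    have heq2 : primG1 g1 (u (k + 1)) - primG1 g1 (u k)
        = ∫ x in (u k)..(u (k + 1)), g1 x := by
      simp only [primG1]
      exact intervalIntegral.integral_interval_sub_left
        (hg1cont.intervalIntegrable _ _) (hg1cont.intervalIntegrable _ _)
    rw [heq2]
    have := my_trapezoid hle hg1cont (hconv1.subset hsub (convex_Icc _ _))
    simpa only [hd_def] using this
  have htel : ∀ j, 1 ≤ j →
      ∑ k ∈ Finset.Icc 1 j, (primG1 g1 (u (k + 1)) - primG1 g1 (u k))
        = primG1 g1 (u (j + 1)) - primG1 g1 (u 1) := by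
    intro j hj
    induction j, hj using Nat.le_induction with
    | base => simp
    | succ j hj ih =>
      rw [Finset.sum_Icc_succ_top (by omega), ih]
      ring
  have hT : primG1 g1 (u n) - primG1 g1 (u 1) ≤ T := by
    have := htel m hm1
    rw [hmn] at this
    rw [← this]
    exact Finset.sum_le_sum htrap
  have hg1u1 : 0 < g1 (u 1) := hg1pos _ hu1
  have hg1le : g1 (u 1) ≤ g1 (u n) :=
    (hg1mono.monotoneOn) (Set.mem_Ici.2 hu1.le) (Set.mem_Ici.2 hun.le) h1n.le
  have hP1 : 0 < primG1 g1 (u 1) := by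
    apply intervalIntegral.intervalIntegral_pos_of_pos_on
      (hg1cont.intervalIntegrable _ _) (fun x hx => hg1pos x hx.1) hu1
  have hg2u1 : 0 < g2 (u 1) := hg2pos _ hu1
  have hg2lt : g2 (u 1) < g2 (u n) :=
    hg2mono (Set.mem_Ici.2 hu1.le) (Set.mem_Ici.2 hun.le) h1n
  have hs : 0 < g2 (u n) ^ 2 := pow_pos (hg2u1.trans hg2lt) 2
  have ht : 0 < g2 (u 1) ^ 2 := by positivity
  have hsq : g1 (u 1) ^ 2 ≤ g1 (u n) ^ 2 := by nlinarith
  have hTle : 2 * T ≤ α ^ 2 * g2 (u n) ^ 2 := by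
    have hnn : 0 ≤ h ^ 2 / 4 * (g1 (u n) ^ 2 - g1 (u 1) ^ 2) :=
      mul_nonneg (by positivity) (by linarith)
    linarith
  have hPn : primG1 g1 (u n) ≤ primG1 g1 (u 1) + α ^ 2 * g2 (u n) ^ 2 / 2 := by
    linarith
  have main1 : GG g1 g2 (u n) < GG g1 g2 (u 1) + α ^ 2 / 2 := by
    simp only [GG]
    have hstep1 : primG1 g1 (u n) / g2 (u n) ^ 2
        ≤ (primG1 g1 (u 1) + α ^ 2 * g2 (u n) ^ 2 / 2) / g2 (u n) ^ 2 := by gcongr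
    have hstep2 : (primG1 g1 (u 1) + α ^ 2 * g2 (u n) ^ 2 / 2) / g2 (u n) ^ 2
        = primG1 g1 (u 1) / g2 (u n) ^ 2 + α ^ 2 / 2 := by
      field_simp
      rw [add_div, mul_div_cancel_right₀ _ hs.ne']
    have hstep3 : primG1 g1 (u 1) / g2 (u n) ^ 2 < primG1 g1 (u 1) / g2 (u 1) ^ 2 := by
      apply div_lt_div_of_pos_left hP1 ht
      nlinarith
    linarith
  refine ⟨main1, ?_⟩
  intro Ginv hmono hbij hinv
  have hGG1 : 0 < GG g1 g2 (u 1) := by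
    simp only [GG]; exact div_pos hP1 ht
  have hy : GG g1 g2 (u 1) + α ^ 2 / 2 ∈ Set.Ioi (0:ℝ) := by
    have : 0 < α ^ 2 / 2 := by positivity
    simp only [Set.mem_Ioi]; linarith
  obtain ⟨hGy, hGGy⟩ := hinv _ hy
  by_contra hcon
  push_neg at hcon
  have hunm : u n ∈ Set.Ioi (0:ℝ) := hun
  have h2 : GG g1 g2 (Ginv (GG g1 g2 (u 1) + α ^ 2 / 2)) ≤ GG g1 g2 (u n) :=
    (hmono.le_iff_le hGy hunm).2 hcon
  rw [hGGy] at h2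
  linarith
end
end

section
/- Let α > 0 and let (u₁,…,u_n) ∈ (0,∞)ⁿ be a positive solution of the discrete system (Sα). Suppose there exists d ∈ [0,1) such that d·g₁(x)/G₁(x) − 2g₂′(x)/g₂(x) ≥ 0 for all x > 0, and that G″(x) ≥ 0 for all x > 0, where g := g₁/g₂ and G := G₁/g₂². Then g²(u₁) < α²/(1−d). Moreover, if g and G are strictly increasing bijections of (0,∞) onto (0,∞), then u₁ < g⁻¹(α/√(1−d)) and u_n < G⁻¹(G(g⁻¹(α/√(1−d))) + α²/2). -/
noncomputable section

open Set intervalIntegral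


lemma trapezoid {f : ℝ → ℝ} (hf : Continuous f)
    (hconv : ConvexOn ℝ (Set.Ici (0:ℝ)) f) {a b : ℝ} (ha : 0 ≤ a) (hab : a ≤ b) :
    ∫ t in a..b, f t ≤ (f a + f b) / 2 * (b - a) := by
  rcases eq_or_lt_of_le hab with rfl | hlt
  · simp
  have hba : (0:ℝ) < b - a := by linarith
  set m : ℝ := (f b - f a) / (b - a) with hm
  have key : ∫ t in a..b, f t ≤ ∫ t in a..b, (f a + m * (t - a)) := by
    apply intervalIntegral.integral_mono_on hab (hf.intervalIntegrable a b)
      (by apply Continuous.intervalIntegrable; continuity)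
    intro t ht
    obtain ⟨hta, htb⟩ := ht
    set s : ℝ := (t - a) / (b - a) with hs
    have hs0 : 0 ≤ s := div_nonneg (by linarith) (le_of_lt hba)
    have hs1 : s ≤ 1 := by rw [hs, div_le_one hba]; linarith
    have hcomb := hconv.2 (mem_Ici.mpr ha) (mem_Ici.mpr (le_trans ha hab))
      (by linarith : (0:ℝ) ≤ 1 - s) hs0 (by ring)
    have ht' : (1 - s) • a + s • b = t := by
      field_simp [smul_eq_mul, hs]
      have hsb : s * (b - a) = t - a := by rw [hs]; exact div_mul_cancel₀ _ hba.ne'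
      linear_combination hsb
    rw [ht'] at hcomb
    have hmst : m * (t - a) = s * (f b - f a) := by
      rw [hm, hs]; field_simp
    calc f t ≤ (1 - s) * f a + s * f b := hcomb
      _ = f a + s * (f b - f a) := by ring
      _ = f a + m * (t - a) := by rw [hmst]
  have hval : ∫ t in a..b, (f a + m * (t - a)) = (f a + f b) / 2 * (b - a) := by
    have : ∫ t in a..b, (f a + m * (t - a)) = (f a) * (b - a) + m * ((b^2 - a^2)/2 - a*(b-a)) := by
      rw [intervalIntegral.integral_add (by apply Continuous.intervalIntegrable; continuity)
        (by apply Continuous.intervalIntegrable; continuity)]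
      rw [intervalIntegral.integral_const, intervalIntegral.integral_const_mul]
      rw [intervalIntegral.integral_sub (by apply Continuous.intervalIntegrable; continuity)
        (by apply Continuous.intervalIntegrable; continuity)]
      simp [integral_id]
      ring
    rw [this, hm]
    field_simp
    ring
  linarith

lemma deriv_contDiff_two {g : ℝ → ℝ} (hC : ContDiff ℝ 3 g) : ContDiff ℝ 2 (deriv g) := by
  have : ContDiff ℝ (2+1) g := by norm_num at hC ⊢; exact hC
  exact (contDiff_succ_iff_deriv.mp this).2.2

lemma strictMonoOn_Ici_aux {g : ℝ → ℝ} (hcont : Continuous g)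
    (hd : ∀ x > (0:ℝ), 0 < deriv g x) : StrictMonoOn g (Ici 0) := by
  apply strictMonoOn_of_deriv_pos (convex_Ici 0) hcont.continuousOn
  intro x hx
  rw [interior_Ici] at hx
  exact hd x hx


set_option maxHeartbeats 1000000 in
theorem stmt_10 (n : ℕ) (hn : 2 ≤ n) (h : ℝ) (hh : h = 1 / ((n : ℝ) - 1))
    (g1 g2 : ℝ → ℝ)
    (hg1C : ContDiff ℝ 3 g1) (hg2C : ContDiff ℝ 3 g2)
    (hg10 : g1 0 = 0) (hg20 : g2 0 = 0)
    (hg1d : ∀ x > (0:ℝ), 0 < deriv g1 x) (hg2d : ∀ x > (0:ℝ), 0 < deriv g2 x)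
    (hg1dd : ∀ x > (0:ℝ), 0 < deriv (deriv g1) x)
    (hg2dd : ∀ x > (0:ℝ), 0 < deriv (deriv g2) x)
    (hg1ddd : ∀ x > (0:ℝ), 0 ≤ deriv (deriv (deriv g1)) x)
    (hg2ddd : ∀ x > (0:ℝ), 0 ≤ deriv (deriv (deriv g2)) x)
    (α : ℝ) (hα : 0 < α) (u : ℕ → ℝ) (hu : IsSolution g1 g2 n h α u)
    (d : ℝ) (hd0 : 0 ≤ d) (hd1 : d < 1)
    (hH2 : ∀ x > (0:ℝ), 0 ≤ d * g1 x / primG1 g1 x - 2 * deriv g2 x / g2 x)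
    (hH3 : ∀ x > (0:ℝ), 0 ≤ deriv (deriv (GG g1 g2)) x) :
    (gg g1 g2 (u 1)) ^ 2 < α ^ 2 / (1 - d) ∧
    (∀ ginv Ginv : ℝ → ℝ,
      StrictMonoOn (gg g1 g2) (Set.Ioi 0) →
      Set.BijOn (gg g1 g2) (Set.Ioi 0) (Set.Ioi 0) →
      StrictMonoOn (GG g1 g2) (Set.Ioi 0) →
      Set.BijOn (GG g1 g2) (Set.Ioi 0) (Set.Ioi 0) →
      (∀ y ∈ Set.Ioi (0:ℝ), ginv y ∈ Set.Ioi 0 ∧ gg g1 g2 (ginv y) = y) →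
      (∀ y ∈ Set.Ioi (0:ℝ), Ginv y ∈ Set.Ioi 0 ∧ GG g1 g2 (Ginv y) = y) →
      u 1 < ginv (α / Real.sqrt (1 - d)) ∧
      u n < Ginv (GG g1 g2 (ginv (α / Real.sqrt (1 - d))) + α ^ 2 / 2)) := by
  obtain ⟨hupos, hbc1, hrec, hbc2⟩ := hu
  have h1d : (0:ℝ) < 1 - d := by linarith
  have hn1 : (1:ℝ) ≤ (n:ℝ) - 1 := by
    have : (2:ℝ) ≤ (n:ℝ) := by exact_mod_cast hn
    linarith
  have hh0 : 0 < h := by rw [hh]; positivity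
  have hhn : h * ((n:ℝ) - 1) = 1 := by
    rw [hh]; field_simp
  -- g1 and g2 basic facts
  have hg1cont := hg1C.continuous
  have hg2cont := hg2C.continuous
  have hg1m : StrictMonoOn g1 (Ici 0) := strictMonoOn_Ici_aux hg1cont hg1d
  have hg2m : StrictMonoOn g2 (Ici 0) := strictMonoOn_Ici_aux hg2cont hg2d
  have hg1pos : ∀ x > (0:ℝ), 0 < g1 x := by
    intro x hx
    have := hg1m (self_mem_Ici) (mem_Ici.mpr hx.le) hx
    rwa [hg10] at this
  have hg2pos : ∀ x > (0:ℝ), 0 < g2 x := by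
    intro x hx
    have := hg2m (self_mem_Ici) (mem_Ici.mpr hx.le) hx
    rwa [hg20] at this
  have hg1diff : Differentiable ℝ g1 := hg1C.differentiable (by norm_num)
  have hg2diff : Differentiable ℝ g2 := hg2C.differentiable (by norm_num)
  have hdg1C : ContDiff ℝ 2 (deriv g1) := deriv_contDiff_two hg1C
  have hdg2C : ContDiff ℝ 2 (deriv g2) := deriv_contDiff_two hg2C
  have hg1conv : ConvexOn ℝ (Ici 0) g1 := by
    apply MonotoneOn.convexOn_of_deriv (convex_Ici 0) hg1cont.continuousOn
      hg1diff.differentiableOn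
    rw [interior_Ici]
    exact ((strictMonoOn_Ici_aux hdg1C.continuous hg1dd).monotoneOn).mono Ioi_subset_Ici_self
  -- u basic facts
  have hu1pos : 0 < u 1 := hupos 1 le_rfl (by omega)
  have hunpos : 0 < u n := hupos n (by omega) le_rfl
  have hstep : ∀ m, 1 ≤ m → m ≤ n - 1 → 0 < u (m+1) - u m := by
    intro m
    induction m with
    | zero => intro h1 _; omega
    | succ k ih =>
      intro _ hk
      rcases Nat.eq_zero_or_pos k with rfl | hkpos
      · have : 0 < g1 (u 1) := hg1pos _ hu1pos
        rw [hbc1]; positivity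
      · have ihk := ih hkpos (by omega)
        have hrk := hrec (k+1) (by omega) (by omega)
        have hidx : k + 1 - 1 = k := by omega
        rw [hidx] at hrk
        have hukpos : 0 < u (k+1) := hupos (k+1) (by omega) (by omega)
        have := hg1pos _ hukpos
        nlinarith [sq_nonneg h]
  have hlow : ∀ m, 1 ≤ m → m ≤ n - 1 →
      h^2 * g1 (u 1) * ((m:ℝ) - 1/2) ≤ u (m+1) - u m ∧
      h^2 * g1 (u 1) * ((m:ℝ)^2/2) ≤ u (m+1) - u 1 := by
    intro m
    induction m with
    | zero => intro h1 _; omega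
    | succ k ih =>
      intro _ hk
      rcases Nat.eq_zero_or_pos k with rfl | hkpos
      · norm_num
        all_goals linarith [hbc1]
      · obtain ⟨ih1, ih2⟩ := ih hkpos (by omega)
        have hrk := hrec (k+1) (by omega) (by omega)
        have hidx : k + 1 - 1 = k := by omega
        rw [hidx] at hrk
        have hg1u1pos : 0 < g1 (u 1) := hg1pos _ hu1pos
        have hu1le : u 1 ≤ u (k+1) := by
          have hnn : 0 ≤ h^2 * g1 (u 1) * ((k:ℝ)^2/2) :=
            mul_nonneg (mul_nonneg (sq_nonneg h) hg1u1pos.le) (by positivity)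
          linarith
        have hg1le : g1 (u 1) ≤ g1 (u (k+1)) :=
          hg1m.monotoneOn (mem_Ici.mpr hu1pos.le) (mem_Ici.mpr (by linarith)) hu1le
        have hsc : h^2 * g1 (u 1) ≤ h^2 * g1 (u (k+1)) :=
          mul_le_mul_of_nonneg_left hg1le (sq_nonneg h)
        have ha' : h^2 * g1 (u 1) * (((k:ℝ)+1) - 1/2) ≤ u (k+1+1) - u (k+1) := by
          linarith [ih1, hsc, hrk]
        refine ⟨by push_cast; linarith [ha'], by push_cast; linarith [ih2, ha']⟩
  have hg1u1pos : 0 < g1 (u 1) := hg1pos _ hu1pos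
  -- u n - u 1 ≥ g1 (u 1) / 2
  have hun1 : g1 (u 1) / 2 ≤ u n - u 1 := by
    have hl := (hlow (n-1) (by omega) le_rfl).2
    rw [show n - 1 + 1 = n from by omega] at hl
    have hcast : ((n - 1 : ℕ) : ℝ) = (n:ℝ) - 1 := by
      have : (1:ℕ) ≤ n := by omega
      push_cast [Nat.cast_sub this]
      ring
    rw [hcast] at hl
    have heq : h^2 * g1 (u 1) * (((n:ℝ)-1)^2/2) = g1 (u 1) / 2 := by
      linear_combination (g1 (u 1)/2 * (h*((n:ℝ)-1)+1)) * hhn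
    linarith
  have hu1n : u 1 < u n := by linarith
  -- trapezoid wrapper
  have htrap2 : ∀ a b : ℝ, 0 < a → a ≤ b →
      2 * (primG1 g1 b - primG1 g1 a) ≤ (g1 a + g1 b) * (b - a) := by
    intro a b ha hab
    have hint : primG1 g1 b - primG1 g1 a = ∫ t in a..b, g1 t := by
      have hadd : (∫ t in (0:ℝ)..a, g1 t) + (∫ t in a..b, g1 t) = ∫ t in (0:ℝ)..b, g1 t :=
        intervalIntegral.integral_add_adjacent_intervals
          (hg1cont.intervalIntegrable 0 a) (hg1cont.intervalIntegrable a b)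
      simp only [primG1]
      linarith
    have := trapezoid hg1cont hg1conv ha.le hab
    rw [hint]
    linarith
  -- energy estimate
  have henergy : ∀ m, 1 ≤ m → m ≤ n - 1 →
      2*h^2*(primG1 g1 (u (m+1)) - primG1 g1 (u 1)) ≤
        (u (m+1) - u m)^2 + h^2*(u (m+1) - u m)*g1 (u (m+1)) + h^4/4*(g1 (u 1))^2 := by
    intro m
    induction m with
    | zero => intro h1 _; omega
    | succ k ih =>
      intro _ hk
      rcases Nat.eq_zero_or_pos k with rfl | hkpos
      · have hu2 : u 1 ≤ u 2 := by nlinarith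
        have ht := htrap2 (u 1) (u 2) hu1pos hu2
        have ht2 := mul_le_mul_of_nonneg_left ht (sq_nonneg h)
        rw [hbc1] at ht2 ⊢
        nlinarith [ht2]
      · have ihk := ih hkpos (by omega)
        have hrk := hrec (k+1) (by omega) (by omega)
        have hidx : k + 1 - 1 = k := by omega
        rw [hidx] at hrk
        have hukpos : 0 < u (k+1) := hupos (k+1) (by omega) (by omega)
        have hstepk := hstep (k+1) (by omega) (by omega)
        have ht := htrap2 (u (k+1)) (u (k+2)) hukpos (by linarith)
        have ht2 := mul_le_mul_of_nonneg_left ht (sq_nonneg h)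
        have hid : (u (k+2) - u (k+1))^2 - (u (k+1) - u k)^2 =
            h^2 * g1 (u (k+1)) * ((u (k+2) - u (k+1)) + (u (k+1) - u k)) := by
          linear_combination ((u (k+2) - u (k+1)) + (u (k+1) - u k)) * hrk
        nlinarith [ht2, ihk, hid]
  -- the key strict inequality (*)
  have hstar : 2 * (primG1 g1 (u n) - primG1 g1 (u 1)) < α^2 * (g2 (u n))^2 := by
    have he := henergy (n-1) (by omega) le_rfl
    rw [show n - 1 + 1 = n from by omega] at he
    rw [hbc2] at he
    have hg1lt : g1 (u 1) < g1 (u n) :=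
      hg1m (mem_Ici.mpr hu1pos.le) (mem_Ici.mpr hunpos.le) hu1n
    have hsq : (g1 (u 1))^2 < (g1 (u n))^2 := by nlinarith
    have h2pos : (0:ℝ) < h^2 := by positivity
    have h4pos : (0:ℝ) < h^4 := by positivity
    have key : h^2 * (2 * (primG1 g1 (u n) - primG1 g1 (u 1))) <
        h^2 * (α^2 * (g2 (u n))^2) := by nlinarith [he, hsq, h4pos]
    exact lt_of_mul_lt_mul_left key h2pos.le
  -- positivity of the primitive
  have hPu1 : 0 < primG1 g1 (u 1) :=
    intervalIntegral.intervalIntegral_pos_of_pos_on (hg1cont.intervalIntegrable _ _)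
      (fun x hx => hg1pos x hx.1) hu1pos
  have hg2u1 : 0 < g2 (u 1) := hg2pos _ hu1pos
  have hg2un : 0 < g2 (u n) := hg2pos _ hunpos
  have hg2le : g2 (u 1) ≤ g2 (u n) :=
    hg2m.monotoneOn (mem_Ici.mpr hu1pos.le) (mem_Ici.mpr hunpos.le) hu1n.le
  -- key : GG (u n) - GG (u 1) < α^2/2
  have hkey : GG g1 g2 (u n) - GG g1 g2 (u 1) < α^2/2 := by
    show primG1 g1 (u n) / (g2 (u n))^2 - primG1 g1 (u 1) / (g2 (u 1))^2 < α^2/2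
    have t1 : primG1 g1 (u 1)/(g2 (u n))^2 ≤ primG1 g1 (u 1)/(g2 (u 1))^2 := by
      apply div_le_div_of_nonneg_left hPu1.le (by positivity)
      nlinarith
    have t2 : (primG1 g1 (u n) - primG1 g1 (u 1))/(g2 (u n))^2 < α^2/2 := by
      rw [div_lt_iff₀ (by positivity)]
      nlinarith [hstar]
    have t3 := sub_div (primG1 g1 (u n)) (primG1 g1 (u 1)) ((g2 (u n))^2)
    linarith [t2, t1, t3.symm.le, t3.le]
  -- derivative of GG
  have hPder : ∀ x : ℝ, HasDerivAt (primG1 g1) (g1 x) x := by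
    intro x
    exact intervalIntegral.integral_hasDerivAt_right (hg1cont.intervalIntegrable _ _)
      (hg1cont.stronglyMeasurable.stronglyMeasurableAtFilter) hg1cont.continuousAt
  set E : ℝ → ℝ := fun x =>
    (g1 x * (g2 x)^2 - primG1 g1 x * (2*(g2 x)*(deriv g2 x)))/((g2 x)^2)^2 with hE
  have hGGder : ∀ x > (0:ℝ), HasDerivAt (GG g1 g2) (E x) x := by
    intro x hx
    have hg2x : g2 x ≠ 0 := ne_of_gt (hg2pos x hx)
    have hd2 : HasDerivAt (fun y => (g2 y)^2) (2*(g2 x)*(deriv g2 x)) x := by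
      have := ((hg2diff x).hasDerivAt).fun_pow 2
      simpa [mul_comm, mul_assoc] using this
    exact (hPder x).div hd2 (pow_ne_zero 2 hg2x)
  have hderivGGeq : ∀ x > (0:ℝ), deriv (GG g1 g2) x = E x := fun x hx => (hGGder x hx).deriv
  have hGGdiffAt : ∀ x > (0:ℝ), DifferentiableAt ℝ (GG g1 g2) x :=
    fun x hx => (hGGder x hx).differentiableAt
  have hEdiff : ∀ x > (0:ℝ), DifferentiableAt ℝ E x := by
    intro x hx
    have hg2x : g2 x ≠ 0 := ne_of_gt (hg2pos x hx)
    apply DifferentiableAt.div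
    · apply DifferentiableAt.sub
      · exact (hg1diff x).mul ((hg2diff x).pow 2)
      · exact ((hPder x).differentiableAt).mul
          (((differentiableAt_const _).mul (hg2diff x)).mul
            ((hdg2C.differentiable (by norm_num)) x))
    · exact ((hg2diff x).pow 2).pow 2
    · exact pow_ne_zero 2 (pow_ne_zero 2 hg2x)
  have hdGGdiff : ∀ x > (0:ℝ), DifferentiableAt ℝ (deriv (GG g1 g2)) x := by
    intro x hx
    apply (hEdiff x hx).congr_of_eventuallyEq
    filter_upwards [Ioi_mem_nhds hx] with y hy using hderivGGeq y hy
  have hmonoD : MonotoneOn (deriv (GG g1 g2)) (Ioi 0) := by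
    apply monotoneOn_of_deriv_nonneg (convex_Ioi 0)
    · exact fun x hx => ((hdGGdiff x hx).continuousAt).continuousWithinAt
    · rw [interior_Ioi]
      exact fun x hx => (hdGGdiff x hx).differentiableWithinAt
    · rw [interior_Ioi]
      exact fun x hx => hH3 x hx
  -- mean value theorem
  obtain ⟨c, hc, hceq⟩ := exists_deriv_eq_slope (GG g1 g2) hu1n
    (fun x hx => ((hGGdiffAt x (lt_of_lt_of_le hu1pos hx.1)).continuousAt).continuousWithinAt)
    (fun x hx => (hGGdiffAt x (lt_trans hu1pos hx.1)).differentiableWithinAt)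
  have hcpos : 0 < c := lt_trans hu1pos hc.1
  have hmvt : deriv (GG g1 g2) (u 1) * (u n - u 1) ≤ GG g1 g2 (u n) - GG g1 g2 (u 1) := by
    have hle : deriv (GG g1 g2) (u 1) ≤ deriv (GG g1 g2) c :=
      hmonoD (mem_Ioi.mpr hu1pos) (mem_Ioi.mpr hcpos) hc.1.le
    have h2 : deriv (GG g1 g2) c * (u n - u 1) = GG g1 g2 (u n) - GG g1 g2 (u 1) := by
      rw [hceq, div_mul_cancel₀ _ (sub_ne_zero.mpr hu1n.ne')]
    nlinarith [mul_le_mul_of_nonneg_right hle (by linarith : (0:ℝ) ≤ u n - u 1)]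
  -- lower bound on deriv GG at u 1
  have hE1 : (1-d) * g1 (u 1) / (g2 (u 1))^2 ≤ deriv (GG g1 g2) (u 1) := by
    rw [hderivGGeq (u 1) hu1pos]
    have h2' := hH2 (u 1) hu1pos
    have hcross : 2 * deriv g2 (u 1) / g2 (u 1) ≤ d * g1 (u 1) / primG1 g1 (u 1) := by
      linarith
    rw [div_le_div_iff₀ hg2u1 hPu1] at hcross
    show (1-d) * g1 (u 1) / (g2 (u 1))^2 ≤
      (g1 (u 1) * (g2 (u 1))^2 - primG1 g1 (u 1) * (2*(g2 (u 1))*(deriv g2 (u 1))))/((g2 (u 1))^2)^2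
    rw [div_le_div_iff₀ (by positivity) (by positivity)]
    have hmul := mul_le_mul_of_nonneg_left hcross (le_of_lt (pow_pos hg2u1 3))
    nlinarith [hmul]
  -- main inequality
  have hfact : 0 ≤ (1-d) * g1 (u 1) / (g2 (u 1))^2 :=
    div_nonneg (mul_nonneg h1d.le hg1u1pos.le) (sq_nonneg _)
  have c1 : (1-d) * g1 (u 1) / (g2 (u 1))^2 * (g1 (u 1)/2) ≤
      (1-d) * g1 (u 1) / (g2 (u 1))^2 * (u n - u 1) :=
    mul_le_mul_of_nonneg_left hun1 hfact
  have c2 : (1-d) * g1 (u 1) / (g2 (u 1))^2 * (u n - u 1) ≤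
      deriv (GG g1 g2) (u 1) * (u n - u 1) :=
    mul_le_mul_of_nonneg_right hE1 (by linarith)
  have main1 : (1-d) * (g1 (u 1)/g2 (u 1))^2 < α^2 := by
    have hident : (1-d) * (g1 (u 1)/g2 (u 1))^2 =
        2 * ((1-d) * g1 (u 1) / (g2 (u 1))^2 * (g1 (u 1)/2)) := by
      field_simp
    rw [hident]
    linarith
  constructor
  · show (g1 (u 1) / g2 (u 1)) ^ 2 < α ^ 2 / (1 - d)
    rw [lt_div_iff₀ h1d]
    linarith [main1]
  · intro ginv Ginv hgm _ hGm _ hgi hGi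
    have hsqrt : 0 < Real.sqrt (1-d) := Real.sqrt_pos.mpr h1d
    set y : ℝ := α / Real.sqrt (1-d) with hy
    have hypos : 0 < y := div_pos hα hsqrt
    obtain ⟨hxpos, hgx⟩ := hgi y (mem_Ioi.mpr hypos)
    have hy2 : y^2 = α^2/(1-d) := by rw [hy, div_pow, Real.sq_sqrt h1d.le]
    have hggu1 : 0 < gg g1 g2 (u 1) := div_pos hg1u1pos hg2u1
    have hgg2 : (gg g1 g2 (u 1))^2 < y^2 := by
      rw [hy2]
      show (g1 (u 1) / g2 (u 1)) ^ 2 < α ^ 2 / (1 - d)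
      rw [lt_div_iff₀ h1d]
      linarith [main1]
    have hglt : gg g1 g2 (u 1) < y := lt_of_pow_lt_pow_left₀ 2 hypos.le hgg2
    have hu1lt : u 1 < ginv y := by
      by_contra hle
      push_neg at hle
      rcases eq_or_lt_of_le hle with heq | hlt
      · rw [heq] at hgx; linarith
      · have := hgm hxpos (mem_Ioi.mpr hu1pos) hlt
        rw [hgx] at this
        linarith
    refine ⟨hu1lt, ?_⟩
    have hGGx : GG g1 g2 (u 1) < GG g1 g2 (ginv y) :=
      hGm (mem_Ioi.mpr hu1pos) hxpos hu1lt
    have hYpos : 0 < GG g1 g2 (ginv y) + α^2/2 := by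
      have hP : 0 < primG1 g1 (ginv y) :=
        intervalIntegral.intervalIntegral_pos_of_pos_on (hg1cont.intervalIntegrable _ _)
          (fun x hx => hg1pos x hx.1) hxpos
      have hg2x : 0 < g2 (ginv y) := hg2pos _ hxpos
      have : 0 < GG g1 g2 (ginv y) := by
        show 0 < primG1 g1 (ginv y) / (g2 (ginv y))^2
        positivity
      positivity
    obtain ⟨hXpos, hGX⟩ := hGi (GG g1 g2 (ginv y) + α^2/2) (mem_Ioi.mpr hYpos)
    have hGGun : GG g1 g2 (u n) < GG g1 g2 (ginv y) + α^2/2 := by linarith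
    by_contra hle
    push_neg at hle
    rcases eq_or_lt_of_le hle with heq | hlt
    · rw [heq] at hGX; linarith
    · have := hGm hXpos (mem_Ioi.mpr hunpos) hlt
      rw [hGX] at this
      linarith
end
end
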